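/- arXiv:2407.01019 — 4 statements merged into one kernel-verified Lean document; each statement's English description precedes it below -/
import Mathlib

section
/- Assume (∇V(y) = 0 ⟹ F(y) = 0) for all y, and assume that for every y* ∈ Z there exist a neighborhood U of y*, constants γ ≥ 0, α₁ ∈ (0,1), c > 0, c₁ > 0 such that (i) V̇(y) ≤ −c·‖∇V(y)‖^γ·‖F(y)‖ for all y ∈ U, (ii) ‖∇V(y)‖ ≥ c₁·(V(y) − V(y*))^{1−α₁} for all y ∈ U, and (iii) γ(1−α₁) < 1. Then every bounded sequence (y_n) generated by the LCR algorithm or by the LCM algorithm converges to some point y* ∈ Z. -/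
open Filter

/-- The Lyapunov derivative `V̇(y) = ⟪∇V(y), F(y)⟫`. -/
noncomputable def lyapDeriv {m : ℕ}
    (F : EuclideanSpace ℝ (Fin m) → EuclideanSpace ℝ (Fin m))
    (V : EuclideanSpace ℝ (Fin m) → ℝ) (y : EuclideanSpace ℝ (Fin m)) : ℝ :=
  inner ℝ (gradient V y) (F y)

/-- `f(y,η) = V(y + η F(y)) − V(y) − λ η V̇(y)`. -/
noncomputable def armijoGap {m : ℕ}
    (F : EuclideanSpace ℝ (Fin m) → EuclideanSpace ℝ (Fin m))
    (V : EuclideanSpace ℝ (Fin m) → ℝ) (lam : ℝ)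
    (y : EuclideanSpace ℝ (Fin m)) (η : ℝ) : ℝ :=
  V (y + η • F y) - V y - lam * η * lyapDeriv F V y

/-- The LCR algorithm. -/
def IsLCR {m : ℕ}
    (F : EuclideanSpace ℝ (Fin m) → EuclideanSpace ℝ (Fin m))
    (V : EuclideanSpace ℝ (Fin m) → ℝ) (lam ηinit f1 : ℝ)
    (y : ℕ → EuclideanSpace ℝ (Fin m)) (η : ℕ → ℝ) : Prop :=
  ∀ n, y (n + 1) = y n + η n • F (y n) ∧
    ∃ p : ℕ, η n = ηinit / f1 ^ p ∧
      armijoGap F V lam (y n) (η n) ≤ 0 ∧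
      ∀ k < p, ¬ armijoGap F V lam (y n) (ηinit / f1 ^ k) ≤ 0

/-- The LCM algorithm (convention `η_{-1} = η_init / f2`). -/
def IsLCM {m : ℕ}
    (F : EuclideanSpace ℝ (Fin m) → EuclideanSpace ℝ (Fin m))
    (V : EuclideanSpace ℝ (Fin m) → ℝ) (lam ηinit f1 f2 : ℝ)
    (y : ℕ → EuclideanSpace ℝ (Fin m)) (η : ℕ → ℝ) : Prop :=
  ∀ n, y (n + 1) = y n + η n • F (y n) ∧
    ∃ p : ℕ, η n = (if n = 0 then ηinit else f2 * η (n - 1)) / f1 ^ p ∧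
      armijoGap F V lam (y n) (η n) ≤ 0 ∧
      ∀ k < p, ¬ armijoGap F V lam (y n) ((if n = 0 then ηinit else f2 * η (n - 1)) / f1 ^ k) ≤ 0

open Metric


private lemma pow_lemma {a b μ : ℝ} (hb : 0 ≤ b) (hba : b ≤ a) (hμ0 : 0 ≤ μ) (hμ1 : μ < 1) :
    (1 - μ) * (a - b) ≤ a ^ μ * (a ^ (1 - μ) - b ^ (1 - μ)) := by
  have ha : 0 ≤ a := hb.trans hba
  have h := Real.geom_mean_le_arith_mean2_weighted (w₁ := μ) (w₂ := 1 - μ) (p₁ := a) (p₂ := b) hμ0 (by linarith) ha hb (by ring)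
  have h1 : a ^ μ * a ^ (1 - μ) = a := by
    rw [← Real.rpow_add' ha (by norm_num)]
    norm_num
  nlinarith [h, h1]

private lemma taylor_bound {m : ℕ} {V : EuclideanSpace ℝ (Fin m) → ℝ}
    (hV : ContDiff ℝ 2 V) {S : Set (EuclideanSpace ℝ (Fin m))} (hconv : Convex ℝ S)
    {L : ℝ} (hL : 0 ≤ L)
    (hLip : ∀ x ∈ S, ∀ z ∈ S, ‖fderiv ℝ V x - fderiv ℝ V z‖ ≤ L * ‖x - z‖)
    {x w : EuclideanSpace ℝ (Fin m)} (hx : x ∈ S) (hw : x + w ∈ S) :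
    V (x + w) - V x - fderiv ℝ V x w ≤ L * ‖w‖ * ‖w‖ := by
  have hVd : Differentiable ℝ V := hV.differentiable (by norm_num)
  set g : EuclideanSpace ℝ (Fin m) → ℝ := fun z => V z - fderiv ℝ V x z with hg
  have hseg : segment ℝ x (x + w) ⊆ S := hconv.segment_subset hx hw
  have hgd : ∀ z, DifferentiableAt ℝ g z := fun z =>
    (hVd z).sub ((fderiv ℝ V x).differentiable z)
  have hgder : ∀ z, fderiv ℝ g z = fderiv ℝ V z - fderiv ℝ V x := by
    intro z
    rw [hg]
    rw [fderiv_fun_sub (hVd z) ((fderiv ℝ V x).differentiable z), (fderiv ℝ V x).fderiv]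
  have hbound : ∀ z ∈ segment ℝ x (x + w), ‖fderiv ℝ g z‖ ≤ L * ‖w‖ := by
    intro z hz
    rw [hgder]
    refine (hLip z (hseg hz) x hx).trans ?_
    have : ‖z - x‖ ≤ ‖w‖ := by
      rw [segment_eq_image'] at hz
      obtain ⟨t, ht, rfl⟩ := hz
      simp only [add_sub_cancel_left, add_sub_cancel_left]
      rw [norm_smul]
      calc ‖t‖ * ‖w‖ ≤ 1 * ‖w‖ := by
            apply mul_le_mul_of_nonneg_right _ (norm_nonneg _)
            rw [Real.norm_eq_abs, abs_le]; constructor <;> linarith [ht.1, ht.2]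
        _ = ‖w‖ := one_mul _
    nlinarith [norm_nonneg w]
  have key := Convex.norm_image_sub_le_of_norm_fderiv_le (𝕜 := ℝ)
    (fun z _ => hgd z) hbound (convex_segment x (x + w))
    (left_mem_segment ℝ x (x + w)) (right_mem_segment ℝ x (x + w))
  have hgx : g (x + w) - g x = V (x + w) - V x - fderiv ℝ V x w := by
    simp only [hg, map_add]; ring
  calc V (x + w) - V x - fderiv ℝ V x w = g (x + w) - g x := hgx.symm
    _ ≤ ‖g (x + w) - g x‖ := le_abs_self _
    _ ≤ L * ‖w‖ * ‖(x + w) - x‖ := key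
    _ = L * ‖w‖ * ‖w‖ := by rw [add_sub_cancel_left]

set_option maxHeartbeats 2000000 in
/-- **Abstract convergence framework.** Under the local angle/Łojasiewicz-type conditions
(i)–(iii) at every point of `Z = {y | V̇(y) = 0}`, every bounded sequence generated by LCR or
LCM converges to some point of `Z`. -/
theorem abstract_convergence
    {m : ℕ} (lam ηinit f1 f2 : ℝ)
    (hlam : lam ∈ Set.Ioo (0 : ℝ) 1) (hηinit : 0 < ηinit) (hf1 : 1 < f1) (hf2 : 1 < f2)
    (F : EuclideanSpace ℝ (Fin m) → EuclideanSpace ℝ (Fin m))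
    (V : EuclideanSpace ℝ (Fin m) → ℝ)
    (hF : Continuous F) (hV : ContDiff ℝ 2 V) (hV0 : ∀ y, 0 ≤ V y)
    (hVdot : ∀ y, lyapDeriv F V y ≤ 0)
    (himp : ∀ y, gradient V y = 0 → F y = 0)
    (hframe : ∀ ystar, lyapDeriv F V ystar = 0 →
      ∃ U ∈ nhds ystar, ∃ γ α₁ c c₁ : ℝ,
        0 ≤ γ ∧ α₁ ∈ Set.Ioo (0 : ℝ) 1 ∧ 0 < c ∧ 0 < c₁ ∧
        (∀ y ∈ U, lyapDeriv F V y ≤ -c * ‖gradient V y‖ ^ γ * ‖F y‖) ∧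
        (∀ y ∈ U, c₁ * (V y - V ystar) ^ (1 - α₁) ≤ ‖gradient V y‖) ∧
        γ * (1 - α₁) < 1)
    (y : ℕ → EuclideanSpace ℝ (Fin m)) (η : ℕ → ℝ)
    (halg : IsLCR F V lam ηinit f1 y η ∨ IsLCM F V lam ηinit f1 f2 y η)
    (hbdd : Bornology.IsBounded (Set.range y)) :
    ∃ ystar, lyapDeriv F V ystar = 0 ∧ Tendsto y atTop (nhds ystar) := by
  obtain ⟨hlam0, hlam1⟩ := hlam
  have hf1_0 : (0:ℝ) < f1 := lt_trans one_pos hf1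
  have hf2_0 : (0:ℝ) < f2 := lt_trans one_pos hf2
  -- unified algorithm facts
  have hstep : ∀ n, y (n+1) = y n + η n • F (y n) := by
    rcases halg with h | h <;> exact fun n => (h n).1
  have hηpos : ∀ n, 0 < η n := by
    rcases halg with h | h
    · intro n; obtain ⟨p, hp, -, -⟩ := (h n).2
      rw [hp]; positivity
    · intro n; induction n using Nat.strong_induction_on with
      | _ n ih =>
        obtain ⟨p, hp, -, -⟩ := (h n).2
        rw [hp]
        rcases Nat.eq_zero_or_pos n with rfl | hn
        · simp only [if_pos rfl]; positivity
        · rw [if_neg hn.ne']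
          have := ih (n-1) (by omega)
          positivity
  have hgap : ∀ n, armijoGap F V lam (y n) (η n) ≤ 0 := by
    rcases halg with h | h <;> (intro n; obtain ⟨p, -, hg, -⟩ := (h n).2; exact hg)
  have hback : ∀ n, 0 < armijoGap F V lam (y n) (f1 * η n) ∨ η n = ηinit ∨
      (n ≠ 0 ∧ f2 * η (n-1) ≤ η n) := by
    rcases halg with h | h
    · intro n; obtain ⟨p, hp, -, hmin⟩ := (h n).2
      cases p with
      | zero => right; left; rw [hp]; simp
      | succ k =>
        left
        have hm := hmin k (Nat.lt_succ_self k)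
        have he : ηinit / f1 ^ k = f1 * η n := by
          rw [hp]; field_simp; ring
        rw [he] at hm
        exact lt_of_not_ge hm
    · intro n; obtain ⟨p, hp, -, hmin⟩ := (h n).2
      cases p with
      | zero =>
        rcases Nat.eq_zero_or_pos n with rfl | hn
        · right; left; rw [hp]; simp
        · right; right; refine ⟨hn.ne', ?_⟩; rw [hp]; rw [if_neg hn.ne']; simp
      | succ k =>
        left
        have hm := hmin k (Nat.lt_succ_self k)
        have he : (if n = 0 then ηinit else f2 * η (n-1)) / f1 ^ k = f1 * η n := by
          rw [hp]; field_simp; ring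
        rw [he] at hm
        exact lt_of_not_ge hm
    -- continuity of the Lyapunov derivative
  have hVd : Differentiable ℝ V := hV.differentiable (by norm_num)
  have hgrad_cont : Continuous (gradient V) := by
    have h1 : Continuous (fderiv ℝ V) := hV.continuous_fderiv (by norm_num)
    exact ((InnerProductSpace.toDual ℝ _).symm.continuous.comp h1 : _)
  have hd_cont : Continuous (lyapDeriv F V) := by
    unfold lyapDeriv
    exact hgrad_cont.inner hF
  have hgradinner : ∀ x v, (fderiv ℝ V x) v = inner ℝ (gradient V x) v := by
    intro x v
    rw [gradient, InnerProductSpace.toDual_symm_apply]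
  -- descent
  have hVle : ∀ n, V (y (n+1)) ≤ V (y n) + lam * η n * lyapDeriv F V (y n) := by
    intro n
    have := hgap n
    unfold armijoGap at this
    rw [hstep n]
    linarith
  have hmono : ∀ n, V (y (n+1)) ≤ V (y n) := by
    intro n
    have h1 := hVle n
    have h2 := hVdot (y n)
    have h3 : 0 ≤ lam * η n * (-lyapDeriv F V (y n)) :=
      mul_nonneg (mul_nonneg hlam0.le (hηpos n).le) (by linarith)
    nlinarith
  have hanti : Antitone fun n => V (y n) :=
    antitone_nat_of_succ_le hmono
  have hbddb : BddBelow (Set.range fun n => V (y n)) := by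
    refine ⟨0, ?_⟩
    rintro x ⟨n, rfl⟩
    exact hV0 _
  set Vinf := ⨅ n, V (y n) with hVinfdef
  clear_value Vinf
  have hVinf : Tendsto (fun n => V (y n)) atTop (nhds Vinf) :=
    hVinfdef ▸ tendsto_atTop_ciInf hanti hbddb
  have hdiff0 : Tendsto (fun n => V (y n) - V (y (n+1))) atTop (nhds 0) := by
    have h2 : Tendsto (fun n => V (y (n+1))) atTop (nhds Vinf) :=
      (tendsto_add_atTop_iff_nat 1).2 hVinf
    simpa using hVinf.sub h2
  have hηd0 : Tendsto (fun n => η n * (-lyapDeriv F V (y n))) atTop (nhds 0) := by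
    have hub : ∀ n, η n * (-lyapDeriv F V (y n)) ≤ (V (y n) - V (y (n+1))) * lam⁻¹ := by
      intro n
      have h1 := hVle n
      have h2 : lam * (η n * (-lyapDeriv F V (y n))) ≤ V (y n) - V (y (n + 1)) := by
        nlinarith
      rw [← div_eq_mul_inv, le_div_iff₀ hlam0, mul_comm]
      exact h2
    have hlb : ∀ n, 0 ≤ η n * (-lyapDeriv F V (y n)) :=
      fun n => mul_nonneg (hηpos n).le (by linarith [hVdot (y n)])
    have htend : Tendsto (fun n => (V (y n) - V (y (n+1))) * lam⁻¹) atTop (nhds 0) := by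
      simpa using hdiff0.mul_const lam⁻¹
    exact squeeze_zero hlb hub htend
  -- Bolzano–Weierstrass
  obtain ⟨ystar, -, φ, hφmono, hyφ⟩ :=
    tendsto_subseq_of_bounded hbdd (fun n => Set.mem_range_self (f := y) n)
  -- points of Z are fixed points
  have hZfix : ∀ z, lyapDeriv F V z = 0 → F z = 0 := by
    intro z hz
    obtain ⟨U, hU, γ, α₁, c, c₁, hγ, hα₁, hc, hc₁, hi, hii, hiii⟩ := hframe z hz
    have h1 := hi z (mem_of_mem_nhds hU)
    rw [hz] at h1
    by_contra hFz
    have hFz' : 0 < ‖F z‖ := norm_pos_iff.2 hFz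
    have hg0 : ‖gradient V z‖ ^ γ = 0 := by
      have hge : 0 ≤ ‖gradient V z‖ ^ γ := Real.rpow_nonneg (norm_nonneg _) _
      by_contra hne
      have hpos : 0 < ‖gradient V z‖ ^ γ := lt_of_le_of_ne hge (Ne.symm hne)
      have hp2 := mul_pos (mul_pos hc hpos) hFz'
      nlinarith
    rcases eq_or_ne γ 0 with rfl | hγ0
    · rw [Real.rpow_zero] at hg0; norm_num at hg0
    · rw [Real.rpow_eq_zero (norm_nonneg _) hγ0, norm_eq_zero] at hg0
      exact hFz (himp z hg0)
    -- common bound region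
  obtain ⟨R0, hR0⟩ := hbdd.subset_closedBall ystar
  set R := max R0 1 with hRdef
  clear_value R
  have hR1 : (1:ℝ) ≤ R := hRdef ▸ le_max_right R0 1
  have hyS : ∀ n, y n ∈ closedBall ystar (R + 1) := by
    intro n
    have h1 : y n ∈ closedBall ystar R0 := hR0 (Set.mem_range_self n)
    rw [mem_closedBall] at h1 ⊢
    have : R0 ≤ R := hRdef ▸ le_max_left R0 1
    linarith
  have hSconv : Convex ℝ (closedBall ystar (R + 1)) := convex_closedBall _ _
  have hScomp : IsCompact (closedBall ystar (R + 1)) := isCompact_closedBall _ _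
  -- Lipschitz constant for the gradient on S
  have h2V : ContDiff ℝ 1 (fderiv ℝ V) := hV.fderiv_right (by norm_num)
  obtain ⟨L0, hL0⟩ := hScomp.exists_bound_of_continuousOn
    (h2V.continuous_fderiv one_ne_zero).continuousOn
  set L := max L0 0 with hLdef
  clear_value L
  have hL : 0 ≤ L := hLdef ▸ le_max_right L0 0
  have hLip : ∀ x ∈ closedBall ystar (R + 1), ∀ z ∈ closedBall ystar (R + 1),
      ‖fderiv ℝ V x - fderiv ℝ V z‖ ≤ L * ‖x - z‖ := by
    intro x hx z hz
    exact Convex.norm_image_sub_le_of_norm_fderiv_le (𝕜 := ℝ) (f := fderiv ℝ V)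
      (fun w _ => h2V.differentiable one_ne_zero w)
      (fun w hw => (hL0 w hw).trans (hLdef ▸ le_max_left L0 0 : L0 ≤ L)) hSconv hz hx
  -- bound on F on S
  obtain ⟨M0, hM0⟩ := hScomp.exists_bound_of_continuousOn hF.continuousOn
  set M := M0 + 1 with hMdef
  clear_value M
  have hM0nn : 0 ≤ M0 := le_trans (norm_nonneg (F ystar))
    (hM0 ystar (mem_closedBall_self (by linarith)))
  have hMpos : 0 < M := by linarith
  have hFM : ∀ x ∈ closedBall ystar (R + 1), ‖F x‖ ≤ M := by
    intro x hx; have := hM0 x hx; linarith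
  -- Claim 2 : the subsequential limit is in Z
  have hdstar : lyapDeriv F V ystar = 0 := by
    by_contra hne
    have hneg : lyapDeriv F V ystar < 0 := (hVdot ystar).lt_of_ne hne
    set δ := -lyapDeriv F V ystar / 2 with hδdef
    clear_value δ
    have hδ : 0 < δ := by simp only [hδdef]; linarith
    have hO : IsOpen {x : EuclideanSpace ℝ (Fin m) | lyapDeriv F V x < -δ} :=
      isOpen_lt hd_cont continuous_const
    have hystarO : ystar ∈ {x : EuclideanSpace ℝ (Fin m) | lyapDeriv F V x < -δ} := by
      simp only [Set.mem_setOf_eq, hδdef]; linarith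
    obtain ⟨r0, hr0pos, hballO⟩ := Metric.isOpen_iff.1 hO ystar hystarO
    set r := min (r0 / 2) (1 / 2) with hrdef
    clear_value r
    have hrpos : 0 < r := hrdef ▸ lt_min (by linarith) (by norm_num)
    have hrhalf : r ≤ 1 / 2 := hrdef ▸ min_le_right (r0/2) (1/2 : ℝ)
    have hdr : ∀ x ∈ closedBall ystar r, lyapDeriv F V x ≤ -δ := by
      intro x hx
      have : x ∈ ball ystar r0 := closedBall_subset_ball (by
        have h9 : r ≤ r0 / 2 := hrdef ▸ min_le_left (r0/2) (1/2 : ℝ); linarith) hx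
      exact le_of_lt (hballO this)
    have hrS : closedBall ystar r ⊆ closedBall ystar (R + 1) :=
      closedBall_subset_closedBall (by linarith)
    set T₂ := min ((1 - lam) * δ / ((L + 1) * M ^ 2)) (1 / (2 * M)) with hT₂def
    clear_value T₂
    have hT₂pos : 0 < T₂ := by
      rw [hT₂def]
      apply lt_min
      · apply div_pos (by nlinarith) (by nlinarith)
      · positivity
    -- the Armijo test succeeds for all small step sizes near ystar
    have hsucc : ∀ x ∈ closedBall ystar r, ∀ t : ℝ, 0 < t → t ≤ T₂ →
        armijoGap F V lam x t ≤ 0 := by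
      intro x hx t ht ht2
      have hxS : x ∈ closedBall ystar (R + 1) := hrS hx
      have hFxM : ‖F x‖ ≤ M := hFM x hxS
      have htM : t * M ≤ 1 / 2 := by
        have h1 : t ≤ 1 / (2 * M) := ht2.trans (hT₂def ▸ min_le_right ((1 - lam) * δ / ((L + 1) * M ^ 2)) (1 / (2 * M)))
        rw [le_div_iff₀ (show (0:ℝ) < 2 * M by linarith)] at h1
        linarith
      have hwnorm : ‖t • F x‖ ≤ t * M := by
        rw [norm_smul, Real.norm_eq_abs, abs_of_pos ht]
        exact mul_le_mul_of_nonneg_left hFxM ht.le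
      have hwS : x + t • F x ∈ closedBall ystar (R + 1) := by
        rw [mem_closedBall]
        have h1 : dist (x + t • F x) x = ‖t • F x‖ := by
          rw [dist_eq_norm, add_sub_cancel_left]
        have h2 := dist_triangle (x + t • F x) x ystar
        rw [mem_closedBall] at hx
        rw [h1] at h2
        have : dist (x + t • F x) ystar ≤ t * M + r := by linarith
        linarith
      have htay := taylor_bound hV hSconv hL hLip hxS hwS
      have hfw : (fderiv ℝ V x) (t • F x) = t * lyapDeriv F V x := by
        rw [hgradinner]
        rw [inner_smul_right]
        rfl
      rw [hfw] at htay
      have hd : lyapDeriv F V x ≤ -δ := hdr x hx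
      have hT2a : t ≤ (1 - lam) * δ / ((L + 1) * M ^ 2) := ht2.trans (hT₂def ▸ min_le_left ((1 - lam) * δ / ((L + 1) * M ^ 2)) (1 / (2 * M)))
      rw [le_div_iff₀ (show (0:ℝ) < (L + 1) * M ^ 2 by nlinarith)] at hT2a
      unfold armijoGap
      have hnorm2 : ‖t • F x‖ * ‖t • F x‖ ≤ t ^ 2 * M ^ 2 := by
        have := norm_nonneg (t • F x)
        nlinarith
      -- V (x + t•F x) - V x ≤ t * d x + L * t^2 * M^2
      have hkey : V (x + t • F x) - V x ≤ t * lyapDeriv F V x + L * (t ^ 2 * M ^ 2) := by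
        nlinarith [htay]
      have hLr : L * (t ^ 2 * M ^ 2) ≤ t * ((1 - lam) * δ) := by
        have h1 : L * (t * ((L + 1) * M ^ 2)) ≤ L * ((1 - lam) * δ) :=
          mul_le_mul_of_nonneg_left hT2a hL
        have h2 : L * (t ^ 2 * M ^ 2) * (L + 1) ≤ t * ((1 - lam) * δ) * (L + 1) := by
          nlinarith
        have h3 : (0:ℝ) < L + 1 := by linarith
        exact le_of_mul_le_mul_right h2 h3
      nlinarith [mul_le_mul_of_nonneg_left hd (mul_nonneg (by linarith : (0:ℝ) ≤ 1 - lam) ht.le)]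
    set T₁ := min (T₂ / f1) (ηinit / 2) with hT₁def
    clear_value T₁
    have hT₁pos : 0 < T₁ := hT₁def ▸ lt_min (by positivity) (by linarith)
    set ε := min T₁ (r / 2 * (f2 - 1) / M) with hεdef
    clear_value ε
    have hεpos : 0 < ε := hεdef ▸ lt_min hT₁pos (by
      apply div_pos _ hMpos; nlinarith)
    have hεT₁ : ε ≤ T₁ := hεdef ▸ min_le_left T₁ (r / 2 * (f2 - 1) / M)
    have hεr : ε * M / (f2 - 1) ≤ r / 2 := by
      have h1 : ε ≤ r / 2 * (f2 - 1) / M := hεdef ▸ min_le_right T₁ (r / 2 * (f2 - 1) / M)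
      rw [le_div_iff₀ hMpos] at h1
      rw [div_le_iff₀ (by linarith : (0:ℝ) < f2 - 1)]
      linarith
    -- key step: small steps in the ball must come from branch 3
    have hkey2 : ∀ i, dist (y i) ystar ≤ r → η i ≤ ε → i ≠ 0 ∧ f2 * η (i - 1) ≤ η i := by
      intro i hdist hηi
      rcases hback i with h1 | h2 | h3
      · exfalso
        have hT : f1 * η i ≤ T₂ := by
          have hεi : η i ≤ T₂ / f1 := le_trans hηi (hεT₁.trans (hT₁def ▸ min_le_left (T₂ / f1) (ηinit / 2)))
          rw [le_div_iff₀ hf1_0] at hεi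
          linarith
        have := hsucc (y i) (mem_closedBall.2 hdist) (f1 * η i)
          (mul_pos hf1_0 (hηpos i)) hT
        linarith
      · exfalso
        have : η i ≤ ηinit / 2 := le_trans hηi (hεT₁.trans (hT₁def ▸ min_le_right (T₂ / f1) (ηinit / 2)))
        rw [h2] at this
        linarith
      · exact h3
    -- walk-back : steps cannot be small near ystar
    have hwb : ∀ n, dist (y n) ystar ≤ r / 2 → ε < η n := by
      intro n hdn
      by_contra hle
      push_neg at hle
      have hQ : ∀ j, j ≤ n → η (n - j) ≤ ε / f2 ^ j ∧
          dist (y (n - j)) ystar ≤ r / 2 + ε * M / (f2 - 1) - ε * M / ((f2 - 1) * f2 ^ j) := by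
        intro j
        induction j with
        | zero =>
          intro _
          constructor
          · simpa using hle
          · simp only [Nat.sub_zero, pow_zero, mul_one]
            have : ε * M / (f2 - 1) - ε * M / (f2 - 1) = 0 := sub_self _
            linarith [hdn]
        | succ j ih =>
          intro hj1
          obtain ⟨hη', hd'⟩ := ih (by omega)
          have hpowpos : (0:ℝ) < f2 ^ j := by positivity
          have hpowpos' : (0:ℝ) < f2 ^ (j+1) := by positivity
          have hεM0 : 0 ≤ ε * M / ((f2 - 1) * f2 ^ j) :=
            div_nonneg (by positivity) (le_of_lt (mul_pos (by linarith) hpowpos))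
          have hdr' : dist (y (n - j)) ystar ≤ r := by
            have := hεr
            linarith
          have hηe : η (n - j) ≤ ε :=
            hη'.trans (div_le_self hεpos.le (one_le_pow₀ hf2.le))
          obtain ⟨hne0, hf2le⟩ := hkey2 (n - j) hdr' hηe
          have hidx : n - (j + 1) = (n - j) - 1 := by omega
          have hidx2 : (n - (j+1)) + 1 = n - j := by omega
          have hη'' : η (n - (j + 1)) ≤ ε / f2 ^ (j + 1) := by
            rw [hidx]
            have h1 : η ((n - j) - 1) ≤ η (n - j) / f2 := by
              rw [le_div_iff₀ hf2_0]; linarith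
            refine h1.trans ?_
            rw [pow_succ]
            rw [div_le_div_iff₀ hf2_0 (by positivity)]
            calc η (n - j) * (f2 ^ j * f2) = (η (n-j) * f2 ^ j) * f2 := by ring
              _ ≤ (ε / f2 ^ j * f2 ^ j) * f2 := by
                  have : η (n - j) * f2 ^ j ≤ ε / f2 ^ j * f2 ^ j := by
                    have h2 : η (n - j) ≤ ε / f2 ^ j := hη'
                    nlinarith
                  nlinarith
              _ = ε * f2 := by field_simp
          refine ⟨hη'', ?_⟩
          have hstepd : dist (y (n - (j+1))) (y (n - j)) ≤ ε / f2 ^ (j+1) * M := by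
            rw [← hidx2, hstep (n - (j+1))]
            rw [dist_eq_norm]
            have : y (n - (j+1)) - (y (n - (j+1)) + η (n - (j+1)) • F (y (n - (j+1)))) =
                -(η (n - (j+1)) • F (y (n - (j+1)))) := by abel
            rw [this, norm_neg, norm_smul, Real.norm_eq_abs, abs_of_pos (hηpos _)]
            have hFb := hFM _ (hyS (n - (j+1)))
            have := hηpos (n - (j+1))
            nlinarith
          have htri := dist_triangle (y (n - (j+1))) (y (n - j)) ystar
          have halg2 : ε / f2 ^ (j+1) * M + (r / 2 + ε * M / (f2 - 1) - ε * M / ((f2 - 1) * f2 ^ j))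
              = r / 2 + ε * M / (f2 - 1) - ε * M / ((f2 - 1) * f2 ^ (j+1)) := by
            have h2ne : f2 ≠ 0 := ne_of_gt hf2_0
            have h21 : f2 - 1 ≠ 0 := by intro h; rw [sub_eq_zero] at h; exact absurd h.symm (ne_of_lt hf2)
            have hpne : f2 ^ j ≠ 0 := pow_ne_zero _ h2ne
            rw [pow_succ]
            field_simp
            ring
          linarith
      obtain ⟨hη0, hd0⟩ := hQ n le_rfl
      simp only [Nat.sub_self] at hη0 hd0
      have hη0' : η 0 ≤ ε := hη0.trans (div_le_self hεpos.le (one_le_pow₀ hf2.le))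
      have hd0' : dist (y 0) ystar ≤ r := by
        have h1 : 0 ≤ ε * M / ((f2 - 1) * f2 ^ n) :=
          div_nonneg (by positivity) (le_of_lt (mul_pos (by linarith) (by positivity)))
        linarith [hεr]
      exact (hkey2 0 hd0' hη0').1 rfl
    -- contradiction with η (φ k) → 0
    have hdφ : Tendsto (fun k => -lyapDeriv F V (y (φ k))) atTop
        (nhds (-lyapDeriv F V ystar)) := ((hd_cont.tendsto ystar).comp hyφ).neg
    have hηφprod : Tendsto (fun k => η (φ k) * (-lyapDeriv F V (y (φ k)))) atTop (nhds 0) :=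
      hηd0.comp hφmono.tendsto_atTop
    have hev : ∀ᶠ k in atTop, δ < -lyapDeriv F V (y (φ k)) := by
      apply hdφ.eventually_const_lt
      simp only [hδdef]; linarith
    have hηφ0 : Tendsto (fun k => η (φ k)) atTop (nhds 0) := by
      have hg0 : Tendsto (fun k => η (φ k) * (-lyapDeriv F V (y (φ k))) * δ⁻¹) atTop (nhds 0) := by
        have h := hηφprod.mul_const δ⁻¹
        rw [zero_mul] at h
        exact h
      have hub : ∀ᶠ k in atTop, η (φ k) ≤ η (φ k) * (-lyapDeriv F V (y (φ k))) * δ⁻¹ := by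
        filter_upwards [hev] with k hk
        have h1 : η (φ k) * δ ≤ η (φ k) * (-lyapDeriv F V (y (φ k))) :=
          mul_le_mul_of_nonneg_left hk.le (hηpos (φ k)).le
        rw [← le_div_iff₀ hδ, div_eq_mul_inv] at h1
        exact h1
      exact squeeze_zero' (Eventually.of_forall fun k => (hηpos (φ k)).le) hub hg0
    have hball2 : ∀ᶠ k in atTop, dist (y (φ k)) ystar ≤ r / 2 := by
      have := Metric.tendsto_nhds.1 hyφ (r / 2) (by linarith)
      filter_upwards [this] with k hk
      exact le_of_lt hk
    have hsm : ∀ᶠ k in atTop, η (φ k) < ε := hηφ0.eventually_lt_const hεpos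
    obtain ⟨k, hk1, hk2⟩ := (hball2.and hsm).exists
    exact absurd (hwb (φ k) hk1) (not_lt.2 hk2.le)
    -- Claim 3 : convergence via the Łojasiewicz-type estimate
  obtain ⟨U, hU, γ, α₁, c, c₁, hγ, hα₁, hc, hc₁, hi, hii, hiii⟩ := hframe ystar hdstar
  obtain ⟨ρ0, hρ0pos, hρ0U⟩ := Metric.mem_nhds_iff.1 hU
  set ρ := ρ0 / 2 with hρdef
  have hρpos : 0 < ρ := by rw [hρdef]; linarith
  have hρU : ∀ x, dist x ystar ≤ ρ → x ∈ U := by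
    intro x hx
    apply hρ0U
    rw [mem_ball]
    rw [hρdef] at hx
    linarith
  -- the limit of V along the sequence is V ystar
  have hVyst : Tendsto (fun k => V (y (φ k))) atTop (nhds (V ystar)) :=
    (hV.continuous.tendsto ystar).comp hyφ
  have hVinf_eq : Vinf = V ystar :=
    tendsto_nhds_unique (hVinf.comp hφmono.tendsto_atTop) hVyst
  have hv0 : ∀ n, 0 ≤ V (y n) - V ystar := by
    intro n
    have h1 : Vinf ≤ V (y n) :=
      le_of_tendsto hVinf (eventually_atTop.2 ⟨n, fun k hk => hanti hk⟩)
    rw [hVinf_eq] at h1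
    linarith
  have hvanti : ∀ n, V (y (n+1)) - V ystar ≤ V (y n) - V ystar := by
    intro n; linarith [hmono n]
  have hvtend : Tendsto (fun n => V (y n) - V ystar) atTop (nhds 0) := by
    have h := hVinf.sub_const (V ystar)
    rw [hVinf_eq, sub_self] at h
    exact h
  set μ := γ * (1 - α₁) with hμdef
  have hμ0 : 0 ≤ μ := mul_nonneg hγ (by linarith [hα₁.2])
  have hθpos : (0:ℝ) < 1 - μ := by linarith [hiii]
  have hApos : 0 < lam * c * c₁ ^ γ := by
    have := Real.rpow_pos_of_pos hc₁ γ
    positivity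
  set K := 1 / (lam * c * c₁ ^ γ) / (1 - μ) with hKdef
  have hKpos : 0 < K := by rw [hKdef]; positivity
  -- single-step bound inside the neighborhood
  have hstepb : ∀ n, dist (y n) ystar ≤ ρ → dist (y (n+1)) (y n) ≤
      K * ((V (y n) - V ystar) ^ (1-μ) - (V (y (n+1)) - V ystar) ^ (1-μ)) := by
    intro n hyn
    have hyU : y n ∈ U := hρU _ hyn
    have hvd : lam * (η n * (-lyapDeriv F V (y n))) ≤
        (V (y n) - V ystar) - (V (y (n+1)) - V ystar) := by
      have := hVle n; nlinarith
    have hdist : dist (y (n+1)) (y n) = η n * ‖F (y n)‖ := by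
      rw [hstep n, dist_eq_norm]
      have h9 : y n + η n • F (y n) - y n = η n • F (y n) := by abel
      rw [h9, norm_smul, Real.norm_eq_abs, abs_of_pos (hηpos n)]
    have hθmono : (V (y (n+1)) - V ystar) ^ (1-μ) ≤ (V (y n) - V ystar) ^ (1-μ) :=
      Real.rpow_le_rpow (hv0 (n+1)) (hvanti n) hθpos.le
    have hRHS0 : 0 ≤ K * ((V (y n) - V ystar) ^ (1-μ) - (V (y (n+1)) - V ystar) ^ (1-μ)) :=
      mul_nonneg hKpos.le (by linarith)
    rcases eq_or_ne (gradient V (y n)) 0 with hg0 | hgne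
    · rw [hdist, himp _ hg0]
      simpa using hRHS0
    rcases eq_or_lt_of_le (hv0 n) with hv00 | hvpos
    · have hd0 : lyapDeriv F V (y n) = 0 := by
        refine le_antisymm (hVdot (y n)) ?_
        nlinarith [hvd, hηpos n, hv0 (n+1), mul_pos hlam0 (hηpos n)]
      rw [hdist, hZfix _ hd0]
      simpa using hRHS0
    · have hgpos : 0 < ‖gradient V (y n)‖ := norm_pos_iff.2 hgne
      have hiN := hi (y n) hyU
      have hiiN := hii (y n) hyU
      have hgγpos : 0 < ‖gradient V (y n)‖ ^ γ := Real.rpow_pos_of_pos hgpos γ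
      have h2 : c₁ ^ γ * (V (y n) - V ystar) ^ μ ≤ ‖gradient V (y n)‖ ^ γ := by
        have h3 := Real.rpow_le_rpow (by positivity) hiiN hγ
        rw [Real.mul_rpow hc₁.le (Real.rpow_nonneg (hv0 n) _),
          ← Real.rpow_mul (hv0 n)] at h3
        rw [hμdef, mul_comm γ (1 - α₁)]
        exact h3
      have h4 : c * ‖gradient V (y n)‖ ^ γ * ‖F (y n)‖ ≤ -lyapDeriv F V (y n) := by
        linarith [hiN]
      have h5 : lam * (η n * (c * ‖gradient V (y n)‖ ^ γ * ‖F (y n)‖)) ≤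
          (V (y n) - V ystar) - (V (y (n+1)) - V ystar) := by
        have h51 : lam * (η n * (c * ‖gradient V (y n)‖ ^ γ * ‖F (y n)‖)) ≤
            lam * (η n * (-lyapDeriv F V (y n))) :=
          mul_le_mul_of_nonneg_left
            (mul_le_mul_of_nonneg_left h4 (hηpos n).le) hlam0.le
        linarith [hvd]
      have hvμ : 0 < (V (y n) - V ystar) ^ μ := Real.rpow_pos_of_pos hvpos μ
      have h6 : 0 ≤ lam * c * (η n * ‖F (y n)‖) :=
        mul_nonneg (mul_nonneg hlam0.le hc.le)
          (mul_nonneg (hηpos n).le (norm_nonneg _))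
      have h7 := mul_le_mul_of_nonneg_left h2 h6
      have hstep2 : lam * c * c₁ ^ γ * ((V (y n) - V ystar) ^ μ) * (η n * ‖F (y n)‖) ≤
          (V (y n) - V ystar) - (V (y (n+1)) - V ystar) := by
        nlinarith [h7, h5]
      have hpl := pow_lemma (hv0 (n+1)) (hvanti n) hμ0 hiii
      have h9 : (V (y n) - V ystar) ^ μ *
          ((1 - μ) * (lam * c * c₁ ^ γ * (η n * ‖F (y n)‖))) ≤
          (V (y n) - V ystar) ^ μ *
          ((V (y n) - V ystar) ^ (1-μ) - (V (y (n+1)) - V ystar) ^ (1-μ)) := by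
        nlinarith [mul_le_mul_of_nonneg_left hstep2 hθpos.le, hpl]
      have h10 : (1 - μ) * (lam * c * c₁ ^ γ * (η n * ‖F (y n)‖)) ≤
          (V (y n) - V ystar) ^ (1-μ) - (V (y (n+1)) - V ystar) ^ (1-μ) :=
        le_of_mul_le_mul_left h9 hvμ
      have hgoal : K * ((V (y n) - V ystar) ^ (1-μ) - (V (y (n+1)) - V ystar) ^ (1-μ)) =
          ((V (y n) - V ystar) ^ (1-μ) - (V (y (n+1)) - V ystar) ^ (1-μ)) /
            ((1 - μ) * (lam * c * c₁ ^ γ)) := by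
        rw [hKdef, div_div, one_div, inv_mul_eq_div,
          mul_comm (lam * c * c₁ ^ γ) (1 - μ)]
      rw [hdist, hgoal, le_div_iff₀ (mul_pos hθpos hApos)]
      nlinarith [h10]
  -- choose the starting index
  have hvθtend : Tendsto (fun n => (V (y n) - V ystar) ^ (1-μ)) atTop (nhds 0) := by
    have hcont : ContinuousAt (fun x : ℝ => x ^ (1-μ)) 0 :=
      Real.continuousAt_rpow_const 0 _ (Or.inr hθpos.le)
    have h0 : (0:ℝ) ^ (1-μ) = 0 := Real.zero_rpow (ne_of_gt hθpos)
    have h := hcont.tendsto.comp hvtend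
    rw [h0] at h
    exact h
  have hev1 : ∀ᶠ k in atTop, dist (y (φ k)) ystar < ρ / 2 := by
    have := Metric.tendsto_nhds.1 hyφ (ρ / 2) (by linarith)
    exact this
  have hev2 : ∀ᶠ k in atTop, K * (V (y (φ k)) - V ystar) ^ (1-μ) < ρ / 2 := by
    have h1 : Tendsto (fun k => K * (V (y (φ k)) - V ystar) ^ (1-μ)) atTop (nhds 0) := by
      have h2 := (hvθtend.comp hφmono.tendsto_atTop).const_mul K
      rw [mul_zero] at h2
      exact h2
    exact h1.eventually_lt_const (by linarith)
  obtain ⟨k₀, hk₀1, hk₀2⟩ := (hev1.and hev2).exists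
  set N := φ k₀ with hNdef
  -- the whole tail stays near ystar
  have hinv : ∀ n, N ≤ n → dist (y n) ystar ≤ ρ ∧
      dist (y n) (y N) ≤ K * ((V (y N) - V ystar) ^ (1-μ) - (V (y n) - V ystar) ^ (1-μ)) := by
    intro n hn
    induction n, hn using Nat.le_induction with
    | base =>
      constructor
      · linarith [hk₀1]
      · rw [dist_self, sub_self, mul_zero]
    | succ n hn ih =>
      obtain ⟨ih1, ih2⟩ := ih
      have hsb := hstepb n ih1
      have htri := dist_triangle (y (n+1)) (y n) (y N)
      have h2 : dist (y (n+1)) (y N) ≤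
          K * ((V (y N) - V ystar) ^ (1-μ) - (V (y (n+1)) - V ystar) ^ (1-μ)) := by
        nlinarith [hsb, ih2, htri]
      refine ⟨?_, h2⟩
      have htri2 := dist_triangle (y (n+1)) (y N) ystar
      have h3 : 0 ≤ (V (y (n+1)) - V ystar) ^ (1-μ) := Real.rpow_nonneg (hv0 _) _
      nlinarith [hk₀1, hk₀2, h2, htri2, mul_nonneg hKpos.le h3]
  -- length bound between any two tail indices
  have hseg : ∀ b, N ≤ b → ∀ a, b ≤ a → dist (y a) (y b) ≤
      K * ((V (y b) - V ystar) ^ (1-μ) - (V (y a) - V ystar) ^ (1-μ)) := by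
    intro b hb a ha
    induction a, ha using Nat.le_induction with
    | base => rw [dist_self, sub_self, mul_zero]
    | succ a ha ih =>
      have hsb := hstepb a ((hinv a (hb.trans ha)).1)
      have htri := dist_triangle (y (a+1)) (y a) (y b)
      linarith [hsb, ih, htri]
  -- the tail is Cauchy
  have hvθanti : ∀ a b, a ≤ b → (V (y b) - V ystar) ^ (1-μ) ≤ (V (y a) - V ystar) ^ (1-μ) :=
    fun a b hab => Real.rpow_le_rpow (hv0 b) (by linarith [hanti hab]) hθpos.le
  have hzC : CauchySeq (fun k => y (k + N)) := by
    apply cauchySeq_of_le_tendsto_0 (fun k => K * (V (y (k + N)) - V ystar) ^ (1-μ))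
    · intro a b k ha hb
      have hbound : ∀ s t : ℕ, s ≤ t → k ≤ s →
          dist (y (t + N)) (y (s + N)) ≤ K * (V (y (k + N)) - V ystar) ^ (1-μ) := by
        intro s t hst hks
        have h1 := hseg (s + N) (by omega) (t + N) (by omega)
        have h2 := hvθanti (k + N) (s + N) (by omega)
        have h3 : 0 ≤ (V (y (t + N)) - V ystar) ^ (1-μ) := Real.rpow_nonneg (hv0 _) _
        nlinarith [mul_le_mul_of_nonneg_left h2 hKpos.le]
      rcases le_total a b with h | h
      · rw [dist_comm]; exact hbound a b h ha
      · exact hbound b a h hb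
    · have h2 := (hvθtend.comp (tendsto_add_atTop_nat N)).const_mul K
      rw [mul_zero] at h2
      exact h2
  obtain ⟨Lpt, hLpt⟩ := cauchySeq_tendsto_of_complete hzC
  have hyL : Tendsto y atTop (nhds Lpt) := (tendsto_add_atTop_iff_nat N).1 hLpt
  have hLeq : Lpt = ystar := tendsto_nhds_unique (hyL.comp hφmono.tendsto_atTop) hyφ
  exact ⟨ystar, hdstar, hLeq ▸ hyL⟩
end

section
/- Under the hypotheses of the abstract convergence framework, let (y_n) be a bounded sequence generated by LCR or LCM converging to y* ∈ Z, and assume additionally that there exist c₂ > 0 and α₂ ≤ 1 with ‖F(y)‖ ≥ c₂·(V(y) − V(y*))^{1−α₂} for all y ∈ U. If α₂/(1−α₁) < γ, then there exists n₀ ∈ ℕ such that for all n ≥ n₀: ‖y_n − y*‖ ≤ C₁ / [ (V(y_{n₀}) − V(y*))^{α₂−γ(1−α₁)} + C₂·Σ_{k=n₀}^{n−1} η_k ]^{(1−γ(1−α₁))/(γ(1−α₁)−α₂)}, where C₁ = 1/(λ·c·c₁^γ·(1−γ(1−α₁))) and C₂ = λ·c·c₁^γ·c₂·(γ(1−α₁)−α₂).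 -/
open Filter

lemma bernoulli_convex_step {a b θ : ℝ} (hb : 0 < b) (hba : b ≤ a) (hθ : 0 < θ) :
    a ^ (-θ) + θ * a ^ (-(θ+1)) * (a - b) ≤ b ^ (-θ) := by
  have ha : 0 < a := hb.trans_le hba
  have hB : 0 < b ^ θ := Real.rpow_pos_of_pos hb θ
  have hA : 0 < a ^ θ := Real.rpow_pos_of_pos ha θ
  have hs0 : 0 ≤ (a - b)/b := div_nonneg (by linarith) hb.le
  have key : 1 + (θ+1) * ((a-b)/b) ≤ (1+(a-b)/b) ^ (θ+1) :=
    one_add_mul_self_le_rpow_one_add (by linarith) (by linarith)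
  have hbp1 : b ^ (θ+1) = b ^ θ * b := by rw [Real.rpow_add_one hb.ne' θ]
  have hap1 : a ^ (θ+1) = a ^ θ * a := by rw [Real.rpow_add_one ha.ne' θ]
  have h2 : (b^θ*b) * (1 + (θ+1) * ((a-b)/b)) ≤ a^θ * a := by
    calc (b^θ*b) * (1 + (θ+1) * ((a-b)/b)) ≤ (b^θ*b) * ((1+(a-b)/b)^(θ+1)) :=
          mul_le_mul_of_nonneg_left key (by positivity)
      _ = (b * (1+(a-b)/b)) ^ (θ+1) := by
          rw [← hbp1, ← Real.mul_rpow hb.le (by linarith)]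
      _ = a ^ (θ+1) := by rw [show b * (1+(a-b)/b) = a by field_simp; ring]
      _ = a^θ * a := hap1
  have h3 : b^θ * (a + θ*(a-b)) ≤ a^θ * a := by
    have heq : (b^θ*b) * (1 + (θ+1) * ((a-b)/b)) = b^θ * (a + θ*(a-b)) := by
      field_simp; ring
    linarith [heq ▸ h2]
  have hgoal : a ^ (-θ) + θ * a ^ (-(θ+1)) * (a - b) = (a + θ*(a-b)) * (a^θ * a)⁻¹ := by
    rw [Real.rpow_neg ha.le, Real.rpow_neg ha.le, hap1]
    field_simp
  rw [hgoal, Real.rpow_neg hb.le, ← div_eq_mul_inv, div_le_iff₀ (by positivity)]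
  rw [← div_eq_inv_mul, le_div_iff₀ hB] at *
  nlinarith [h3]

lemma bernoulli_concave_step {a b p : ℝ} (hb : 0 ≤ b) (hba : b ≤ a) (ha : 0 < a)
    (hp1 : 0 < p) (hp2 : p ≤ 1) :
    p * a ^ (p-1) * (a - b) ≤ a ^ p - b ^ p := by
  have key : (1 + (b/a - 1)) ^ p ≤ 1 + p * (b/a - 1) :=
    rpow_one_add_le_one_add_mul_self (by
      have : 0 ≤ b / a := div_nonneg hb ha.le
      linarith) hp1.le hp2
  have h1 : (b/a) ^ p ≤ 1 + p * (b/a - 1) := by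
    have : 1 + (b/a - 1) = b/a := by ring
    rwa [this] at key
  have hA : 0 < a ^ p := Real.rpow_pos_of_pos ha p
  have h2 : b ^ p ≤ a^p * (1 + p*(b/a-1)) := by
    calc b^p = a^p * (b/a)^p := by
          rw [← Real.mul_rpow ha.le (div_nonneg hb ha.le),
            show a * (b/a) = b by field_simp]
      _ ≤ a^p * (1+p*(b/a-1)) := mul_le_mul_of_nonneg_left h1 hA.le
  have hap : a ^ p = a^(p-1) * a := by
    rw [← Real.rpow_add_one ha.ne' (p-1)]; norm_num
  have h3 : a^p * (1 + p*(b/a-1)) = a^p - p * a^(p-1) * (a-b) := by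
    rw [hap]; field_simp; ring
  linarith [h3 ▸ h2]


set_option maxHeartbeats 1000000 in
/-- **Subexponential convergence rate** in the abstract convergence framework, in the case
`α₂/(1−α₁) < γ`, with `C₁ = 1/(λ c c₁^γ (1−γ(1−α₁)))` and
`C₂ = λ c c₁^γ c₂ (γ(1−α₁) − α₂)`. -/
theorem abstract_convergence_rate_subexponential
    {m : ℕ} (lam ηinit f1 f2 : ℝ)
    (hlam : lam ∈ Set.Ioo (0 : ℝ) 1) (hηinit : 0 < ηinit) (hf1 : 1 < f1) (hf2 : 1 < f2)
    (F : EuclideanSpace ℝ (Fin m) → EuclideanSpace ℝ (Fin m))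
    (V : EuclideanSpace ℝ (Fin m) → ℝ)
    (hF : Continuous F) (hV : ContDiff ℝ 2 V) (hV0 : ∀ y, 0 ≤ V y)
    (hVdot : ∀ y, lyapDeriv F V y ≤ 0)
    (himp : ∀ y, gradient V y = 0 → F y = 0)
    (y : ℕ → EuclideanSpace ℝ (Fin m)) (η : ℕ → ℝ)
    (halg : IsLCR F V lam ηinit f1 y η ∨ IsLCM F V lam ηinit f1 f2 y η)
    (hbdd : Bornology.IsBounded (Set.range y))
    (ystar : EuclideanSpace ℝ (Fin m)) (hZ : lyapDeriv F V ystar = 0)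
    (hconv : Tendsto y atTop (nhds ystar))
    (U : Set (EuclideanSpace ℝ (Fin m))) (hU : U ∈ nhds ystar)
    (γ α₁ c c₁ c₂ α₂ : ℝ)
    (hγ : 0 ≤ γ) (hα₁ : α₁ ∈ Set.Ioo (0 : ℝ) 1) (hc : 0 < c) (hc₁ : 0 < c₁)
    (hi : ∀ z ∈ U, lyapDeriv F V z ≤ -c * ‖gradient V z‖ ^ γ * ‖F z‖)
    (hii : ∀ z ∈ U, c₁ * (V z - V ystar) ^ (1 - α₁) ≤ ‖gradient V z‖)
    (hiii : γ * (1 - α₁) < 1)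
    (hc₂ : 0 < c₂) (hα₂ : α₂ ≤ 1)
    (hiv : ∀ z ∈ U, c₂ * (V z - V ystar) ^ (1 - α₂) ≤ ‖F z‖)
    (hcase : α₂ / (1 - α₁) < γ) :
    ∃ n₀ : ℕ, ∀ n ≥ n₀,
      ‖y n - ystar‖ ≤
        (1 / (lam * c * c₁ ^ γ * (1 - γ * (1 - α₁)))) /
          ((V (y n₀) - V ystar) ^ (α₂ - γ * (1 - α₁)) +
              lam * c * c₁ ^ γ * c₂ * (γ * (1 - α₁) - α₂) * ∑ k ∈ Finset.Ico n₀ n, η k) ^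
            ((1 - γ * (1 - α₁)) / (γ * (1 - α₁) - α₂)) := by
  obtain ⟨hlam0, hlam1⟩ := hlam
  obtain ⟨hα₁0, hα₁1⟩ := hα₁
  have hf1' : (0:ℝ) < f1 := lt_trans one_pos hf1
  have hf2' : (0:ℝ) < f2 := lt_trans one_pos hf2
  have h1α₁ : 0 < 1 - α₁ := by linarith
  -- basic algorithm facts
  have hstep : ∀ n, y (n+1) = y n + η n • F (y n) := by
    rcases halg with h | h <;> exact fun n => (h n).1
  have hgap : ∀ n, armijoGap F V lam (y n) (η n) ≤ 0 := by
    rcases halg with h | h <;> exact fun n => (h n).2.choose_spec.2.1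
  have hη : ∀ n, 0 < η n := by
    rcases halg with h | h
    · intro n
      obtain ⟨p, hp, -⟩ := (h n).2
      rw [hp]; positivity
    · intro n
      induction n using Nat.strong_induction_on with
      | _ n ih =>
        obtain ⟨p, hp, -⟩ := (h n).2
        rw [hp]
        rcases n with _ | k
        · simp only [if_pos rfl]; positivity
        · simp only [Nat.succ_ne_zero, if_false, Nat.add_sub_cancel]
          have hk := ih k (Nat.lt_succ_self k)
          positivity
  -- abbreviations
  set σ := γ * (1 - α₁) with hσdef
  have hσ0 : 0 ≤ σ := mul_nonneg hγ h1α₁.le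
  have hσ1 : σ < 1 := hiii
  set θ := σ - α₂ with hθdef
  have hθ0 : 0 < θ := by
    have h := (div_lt_iff₀ h1α₁).mp hcase
    simp only [hθdef, hσdef]
    nlinarith
  set L := lam * c * c₁ ^ γ with hLdef
  have hc₁γ : 0 < c₁ ^ γ := Real.rpow_pos_of_pos hc₁ γ
  have hL : 0 < L := by positivity
  set K := L * c₂ with hKdef
  have hK : 0 < K := by positivity
  -- V decreasing along the sequence
  have hVmono : ∀ n, V (y (n+1)) ≤ V (y n) := by
    intro n
    have h := hgap n
    unfold armijoGap at h
    rw [← hstep n] at h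
    nlinarith [mul_nonpos_of_nonneg_of_nonpos
      (mul_nonneg hlam0.le (hη n).le) (hVdot (y n))]
  have hanti : Antitone fun n => V (y n) := antitone_nat_of_succ_le hVmono
  have hVlim : Tendsto (fun n => V (y n)) atTop (nhds (V ystar)) :=
    (hV.continuous.tendsto ystar).comp hconv
  have hVstar_le : ∀ n, V ystar ≤ V (y n) := fun n =>
    le_of_tendsto hVlim (eventually_atTop.2 ⟨n, fun N hN => hanti hN⟩)
  set e : ℕ → ℝ := fun n => V (y n) - V ystar with hedef
  have he0 : ∀ n, 0 ≤ e n := fun n => sub_nonneg.2 (hVstar_le n)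
  have hemono : ∀ n, e (n+1) ≤ e n := fun n => sub_le_sub_right (hVmono n) _
  -- eventually in U
  obtain ⟨n₀, hn₀⟩ : ∃ n₀, ∀ n ≥ n₀, y n ∈ U :=
    eventually_atTop.mp (hconv.eventually_mem hU)
  refine ⟨n₀, fun n hn => ?_⟩
  -- key decrease inequality
  have hkey : ∀ k, n₀ ≤ k →
      lam * c * η k * (‖gradient V (y k)‖ ^ γ * ‖F (y k)‖) ≤ e k - e (k+1) := by
    intro k hk
    have h := hgap k
    unfold armijoGap at h
    rw [← hstep k] at h
    have hi' := hi _ (hn₀ k hk)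
    have h2 : lam * η k * lyapDeriv F V (y k) ≤
        lam * η k * (-c * ‖gradient V (y k)‖ ^ γ * ‖F (y k)‖) := by
      exact mul_le_mul_of_nonneg_left hi' (mul_nonneg hlam0.le (hη k).le)
    simp only [hedef]
    nlinarith [h2, h]
  -- F vanishes where e vanishes
  have hFzero : ∀ k, n₀ ≤ k → e k = 0 → F (y k) = 0 ∧ e (k+1) = 0 := by
    intro k hk hek
    have hek1 : e (k+1) = 0 := le_antisymm (hek ▸ hemono k) (he0 _)
    have h := hgap k
    unfold armijoGap at h
    rw [← hstep k] at h
    have hVd0 : lyapDeriv F V (y k) = 0 := by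
      have h5 : (0:ℝ) ≤ lam * η k * lyapDeriv F V (y k) := by
        have : e (k+1) - e k ≤ lam * η k * lyapDeriv F V (y k) := by
          simp only [hedef]; linarith
        rw [hek, hek1] at this; linarith
      refine le_antisymm (hVdot _) ?_
      by_contra hneg
      push_neg at hneg
      nlinarith [h5, mul_pos hlam0 (hη k)]
    have hi' := hi _ (hn₀ k hk)
    rw [hVd0] at hi'
    have hprod : ‖gradient V (y k)‖ ^ γ * ‖F (y k)‖ = 0 := by
      have hn1 : 0 ≤ ‖gradient V (y k)‖ ^ γ := Real.rpow_nonneg (norm_nonneg _) γ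
      have hn2 : 0 ≤ ‖F (y k)‖ := norm_nonneg _
      have h0 : 0 ≤ ‖gradient V (y k)‖ ^ γ * ‖F (y k)‖ := mul_nonneg hn1 hn2
      by_contra hne
      have hgt : 0 < ‖gradient V (y k)‖ ^ γ * ‖F (y k)‖ := lt_of_le_of_ne h0 (Ne.symm hne)
      nlinarith [mul_pos hc hgt, hi']
    rcases mul_eq_zero.mp hprod with h' | h'
    · rcases (Real.rpow_eq_zero_iff_of_nonneg (norm_nonneg _)).mp h' with ⟨hg, -⟩
      exact ⟨himp _ (norm_eq_zero.mp hg), hek1⟩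
    · exact ⟨norm_eq_zero.mp h', hek1⟩
  -- gradient lower bound, raised to power γ
  have hgradγ : ∀ k, n₀ ≤ k → c₁ ^ γ * e k ^ σ ≤ ‖gradient V (y k)‖ ^ γ := by
    intro k hk
    have hgrad := hii _ (hn₀ k hk)
    calc c₁ ^ γ * e k ^ σ = (c₁ * e k ^ (1-α₁)) ^ γ := by
          rw [Real.mul_rpow hc₁.le (Real.rpow_nonneg (he0 k) _),
            show σ = (1-α₁) * γ by rw [hσdef]; ring, Real.rpow_mul (he0 k)]
      _ ≤ ‖gradient V (y k)‖ ^ γ :=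
          Real.rpow_le_rpow (mul_nonneg hc₁.le (Real.rpow_nonneg (he0 k) _)) hgrad hγ
  -- per-step concave inequality
  have hA : ∀ k, n₀ ≤ k →
      L * (1-σ) * (η k * ‖F (y k)‖) ≤ e k ^ (1-σ) - e (k+1) ^ (1-σ) := by
    intro k hk
    rcases eq_or_lt_of_le (he0 k) with hek | hek
    · obtain ⟨hF0, hek1⟩ := hFzero k hk hek.symm
      rw [hF0, ← hek, hek1]
      simp [Real.zero_rpow (by linarith : (1:ℝ)-σ ≠ 0)]
    · have h1 : L * (η k * ‖F (y k)‖) * e k ^ σ ≤ e k - e (k+1) := by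
        have hg := hgradγ k hk
        have hk2 := hkey k hk
        have h4 : lam * c * η k * ((c₁ ^ γ * e k ^ σ) * ‖F (y k)‖) ≤
            lam * c * η k * (‖gradient V (y k)‖ ^ γ * ‖F (y k)‖) := by
          apply mul_le_mul_of_nonneg_left _
            (mul_nonneg (mul_nonneg hlam0.le hc.le) (hη k).le)
          exact mul_le_mul_of_nonneg_right hg (norm_nonneg _)
        calc L * (η k * ‖F (y k)‖) * e k ^ σ
            = lam * c * η k * ((c₁ ^ γ * e k ^ σ) * ‖F (y k)‖) := by
              rw [hLdef]; ring
          _ ≤ e k - e (k+1) := le_trans h4 hk2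
      have h2 := bernoulli_concave_step (he0 (k+1)) (hemono k) hek
        (by linarith : (0:ℝ) < 1 - σ) (by linarith)
      have hinv : e k ^ (-σ) * e k ^ σ = 1 := by
        rw [← Real.rpow_add hek]; norm_num
      have h5 : (1-σ) * e k ^ (-σ) * (L * (η k * ‖F (y k)‖) * e k ^ σ) =
          L * (1-σ) * (η k * ‖F (y k)‖) := by
        linear_combination (L * (1-σ) * (η k * ‖F (y k)‖)) * hinv
      have h6 : (1-σ) * e k ^ (-σ) * (L * (η k * ‖F (y k)‖) * e k ^ σ) ≤
          (1-σ) * e k ^ (-σ) * (e k - e (k+1)) := by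
        apply mul_le_mul_of_nonneg_left h1
        exact mul_nonneg (by linarith) (Real.rpow_nonneg (he0 k) _)
      have h7 : (1-σ) * e k ^ ((1-σ)-1) * (e k - e (k+1)) ≤
          e k ^ (1-σ) - e (k+1) ^ (1-σ) := h2
      rw [show (1:ℝ)-σ-1 = -σ by ring] at h7
      linarith [h5 ▸ h6]
  -- per-step convex inequality
  have hB : ∀ k, n₀ ≤ k → 0 < e (k+1) →
      e k ^ (-θ) + θ * K * η k ≤ e (k+1) ^ (-θ) := by
    intro k hk hek1
    have hek : 0 < e k := lt_of_lt_of_le hek1 (hemono k)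
    have hFb := hiv _ (hn₀ k hk)
    have hg := hgradγ k hk
    have hkk := hkey k hk
    have hprod : c₁ ^ γ * c₂ * e k ^ (1+θ) ≤
        ‖gradient V (y k)‖ ^ γ * ‖F (y k)‖ := by
      have h1 : (c₁ ^ γ * e k ^ σ) * (c₂ * e k ^ (1-α₂)) ≤
          ‖gradient V (y k)‖ ^ γ * ‖F (y k)‖ := by
        apply mul_le_mul hg hFb (mul_nonneg hc₂.le (Real.rpow_nonneg (he0 k) _))
          (Real.rpow_nonneg (norm_nonneg _) _)
      calc c₁ ^ γ * c₂ * e k ^ (1+θ) = (c₁ ^ γ * e k ^ σ) * (c₂ * e k ^ (1-α₂)) := by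
            rw [show (1:ℝ)+θ = σ + (1-α₂) by rw [hθdef]; ring, Real.rpow_add hek]; ring
        _ ≤ _ := h1
    have hkey2 : K * η k * e k ^ (1+θ) ≤ e k - e (k+1) := by
      have h4 : lam * c * η k * (c₁ ^ γ * c₂ * e k ^ (1+θ)) ≤
          lam * c * η k * (‖gradient V (y k)‖ ^ γ * ‖F (y k)‖) :=
        mul_le_mul_of_nonneg_left hprod
          (mul_nonneg (mul_nonneg hlam0.le hc.le) (hη k).le)
      calc K * η k * e k ^ (1+θ) = lam * c * η k * (c₁ ^ γ * c₂ * e k ^ (1+θ)) := by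
            rw [hKdef, hLdef]; ring
        _ ≤ e k - e (k+1) := le_trans h4 hkk
    have hbern := bernoulli_convex_step hek1 (hemono k) hθ0
    have hinv : e k ^ (-(θ+1)) * e k ^ (1+θ) = 1 := by
      rw [← Real.rpow_add hek, show -(θ+1) + (1+θ) = 0 by ring, Real.rpow_zero]
    have h5 : θ * e k ^ (-(θ+1)) * (K * η k * e k ^ (1+θ)) = θ * K * η k := by
      linear_combination (θ * K * η k) * hinv
    have h6 : θ * e k ^ (-(θ+1)) * (K * η k * e k ^ (1+θ)) ≤
        θ * e k ^ (-(θ+1)) * (e k - e (k+1)) := by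
      apply mul_le_mul_of_nonneg_left hkey2
      exact mul_nonneg hθ0.le (Real.rpow_nonneg (he0 k) _)
    linarith [h5 ▸ h6, hbern]
  -- sum of the concave steps: distance bound
  have hsumA : ∀ N, n ≤ N → ‖y n - y N‖ ≤ (e n ^ (1-σ) - e N ^ (1-σ)) / (L * (1-σ)) := by
    intro N hN
    induction N, hN using Nat.le_induction with
    | base => simp
    | succ N hN ih =>
      have hstepN : ‖y N - y (N+1)‖ = η N * ‖F (y N)‖ := by
        rw [hstep N]
        rw [show y N - (y N + η N • F (y N)) = -(η N • F (y N)) by abel]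
        rw [norm_neg, norm_smul, Real.norm_eq_abs, abs_of_pos (hη N)]
      have hAN := hA N (le_trans hn hN)
      have hL1σ : 0 < L * (1-σ) := by
        have : (0:ℝ) < 1 - σ := by linarith
        positivity
      calc ‖y n - y (N+1)‖ ≤ ‖y n - y N‖ + ‖y N - y (N+1)‖ := by
            have := norm_sub_le_norm_sub_add_norm_sub (y n) (y N) (y (N+1))
            exact this
        _ ≤ (e n ^ (1-σ) - e N ^ (1-σ)) / (L * (1-σ)) + η N * ‖F (y N)‖ := by
            rw [hstepN]; linarith
        _ ≤ (e n ^ (1-σ) - e N ^ (1-σ)) / (L * (1-σ)) +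
            (e N ^ (1-σ) - e (N+1) ^ (1-σ)) / (L * (1-σ)) := by
            gcongr
            rw [le_div_iff₀ hL1σ]
            nlinarith [hAN]
        _ = (e n ^ (1-σ) - e (N+1) ^ (1-σ)) / (L * (1-σ)) := by
            rw [← add_div]; ring_nf
  have hL1σ : 0 < L * (1-σ) := by
    have : (0:ℝ) < 1 - σ := by linarith
    positivity
  have hnorm : ‖y n - ystar‖ ≤ e n ^ (1-σ) / (L * (1-σ)) := by
    have ht : Tendsto (fun N => ‖y n - y N‖) atTop (nhds ‖y n - ystar‖) :=
      ((tendsto_const_nhds.sub hconv).norm)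
    refine le_of_tendsto ht (eventually_atTop.2 ⟨n, fun N hN => ?_⟩)
    calc ‖y n - y N‖ ≤ (e n ^ (1-σ) - e N ^ (1-σ)) / (L * (1-σ)) := hsumA N hN
      _ ≤ e n ^ (1-σ) / (L * (1-σ)) := by
          have hnn : 0 ≤ e N ^ (1-σ) := Real.rpow_nonneg (he0 N) _
          gcongr
          linarith
  -- rewrite the goal in terms of e and θ
  have he_anti : ∀ a b : ℕ, a ≤ b → e b ≤ e a := fun a b h =>
    sub_le_sub_right (hanti h) _
  have hE0 : V (y n₀) - V ystar = e n₀ := rfl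
  rw [hE0, show α₂ - σ = -θ by rw [hθdef]; ring]
  set S := ∑ k ∈ Finset.Ico n₀ n, η k with hSdef
  have hS0 : 0 ≤ S := Finset.sum_nonneg fun k _ => (hη k).le
  by_cases hen : e n = 0
  · -- the sequence has reached the limit
    have hconst : ∀ N, n ≤ N → y N = y n ∧ e N = 0 := by
      intro N hN
      induction N, hN using Nat.le_induction with
      | base => exact ⟨rfl, hen⟩
      | succ N hN ih =>
        obtain ⟨hyN, heN⟩ := ih
        obtain ⟨hF0, he1⟩ := hFzero N (le_trans hn hN) heN
        refine ⟨?_, he1⟩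
        rw [hstep N, hF0]
        simp [hyN]
    have hys : ystar = y n := by
      apply tendsto_nhds_unique hconv
      apply Tendsto.congr' _ tendsto_const_nhds
      filter_upwards [eventually_atTop.2 ⟨n, fun N hN => (hconst N hN).1⟩] with N hN
      exact hN.symm
    rw [hys, sub_self, norm_zero]
    apply div_nonneg
    · apply div_nonneg zero_le_one hL1σ.le
    · apply Real.rpow_nonneg
      have h1 : 0 ≤ e n₀ ^ (-θ) := Real.rpow_nonneg (he0 n₀) _
      have h2 : 0 ≤ K * θ * S := mul_nonneg (mul_nonneg hK.le hθ0.le) hS0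
      linarith
  · have hen' : 0 < e n := lt_of_le_of_ne (he0 n) (Ne.symm hen)
    have hepos : ∀ k, k ≤ n → 0 < e k := fun k hk =>
      lt_of_lt_of_le hen' (he_anti k n hk)
    have hsumB : ∀ N, n₀ ≤ N → N ≤ n →
        e n₀ ^ (-θ) + θ * K * ∑ k ∈ Finset.Ico n₀ N, η k ≤ e N ^ (-θ) := by
      intro N hN1
      induction N, hN1 using Nat.le_induction with
      | base => intro _; simp
      | succ N hN ih =>
        intro hN2
        have ih' := ih (le_trans (Nat.le_succ N) hN2)
        have hBN := hB N hN (hepos (N+1) hN2)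
        rw [Finset.sum_Ico_succ_top hN]
        linarith
    have hsB := hsumB n hn le_rfl
    set D := e n₀ ^ (-θ) + K * θ * S with hDdef
    have hD2 : D ≤ e n ^ (-θ) := by
      rw [hDdef]
      linarith [hsB]
    have hDpos : 0 < D := by
      rw [hDdef]
      have h1 : 0 < e n₀ ^ (-θ) := Real.rpow_pos_of_pos (hepos n₀ hn) _
      have h2 : 0 ≤ K * θ * S := mul_nonneg (mul_nonneg hK.le hθ0.le) hS0
      linarith
    have hq0 : 0 ≤ (1-σ)/θ := div_nonneg (by linarith) hθ0.le
    have hDq : D ^ ((1-σ)/θ) ≤ (e n ^ (1-σ))⁻¹ := by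
      have h1 : D ^ ((1-σ)/θ) ≤ (e n ^ (-θ)) ^ ((1-σ)/θ) :=
        Real.rpow_le_rpow hDpos.le hD2 hq0
      have hθne : θ ≠ 0 := hθ0.ne'
      have hexp : -θ * ((1-σ)/θ) = -(1-σ) := by
        field_simp
      have h2 : (e n ^ (-θ)) ^ ((1-σ)/θ) = e n ^ (-(1-σ)) := by
        rw [← Real.rpow_mul (he0 n), hexp]
      rw [h2, Real.rpow_neg (he0 n)] at h1
      exact h1
    have henp : 0 < e n ^ (1-σ) := Real.rpow_pos_of_pos hen' _
    have hDqpos : 0 < D ^ ((1-σ)/θ) := Real.rpow_pos_of_pos hDpos _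
    have hfinal : e n ^ (1-σ) / (L*(1-σ)) ≤ (1/(L*(1-σ))) / D ^ ((1-σ)/θ) := by
      rw [div_le_div_iff₀ hL1σ hDqpos]
      have h3 : e n ^ (1-σ) * D ^ ((1-σ)/θ) ≤ e n ^ (1-σ) * (e n ^ (1-σ))⁻¹ :=
        mul_le_mul_of_nonneg_left hDq henp.le
      rw [mul_inv_cancel₀ henp.ne'] at h3
      calc e n ^ (1-σ) * D ^ ((1-σ)/θ) ≤ 1 := h3
        _ = 1 / (L*(1-σ)) * (L*(1-σ)) := by rw [one_div_mul_cancel hL1σ.ne']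
    exact le_trans hnorm hfinal
end

section
/- Under the hypotheses of the abstract convergence framework, let (y_n) be a bounded sequence generated by LCR or LCM converging to y* ∈ Z, and assume additionally that there exist c₂ > 0 and α₂ ≤ 1 with ‖F(y)‖ ≥ c₂·(V(y) − V(y*))^{1−α₂} for all y ∈ U. If α₂/(1−α₁) = γ, then the convergence is exponential: there exists n₀ ∈ ℕ such that for all n ≥ n₀: ‖y_n − y*‖ ≤ C₁·(V(y_{n₀}) − V(y*))^{1−γ(1−α₁)}·exp(−C₃·Σ_{k=n₀}^{n−1} η_k), where C₁ = 1/(λ·c·c₁^γ·(1−γ(1−α₁))) and C₃ = c₂/C₁. -/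
open Filter

set_option maxHeartbeats 2000000 in
/-- **Exponential convergence rate** in the abstract convergence framework, in the case
`α₂/(1−α₁) = γ`, with `C₁ = 1/(λ c c₁^γ (1−γ(1−α₁)))` and `C₃ = c₂/C₁`. -/
theorem abstract_convergence_rate_exponential
    {m : ℕ} (lam ηinit f1 f2 : ℝ)
    (hlam : lam ∈ Set.Ioo (0 : ℝ) 1) (hηinit : 0 < ηinit) (hf1 : 1 < f1) (hf2 : 1 < f2)
    (F : EuclideanSpace ℝ (Fin m) → EuclideanSpace ℝ (Fin m))
    (V : EuclideanSpace ℝ (Fin m) → ℝ)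
    (hF : Continuous F) (hV : ContDiff ℝ 2 V) (hV0 : ∀ y, 0 ≤ V y)
    (hVdot : ∀ y, lyapDeriv F V y ≤ 0)
    (himp : ∀ y, gradient V y = 0 → F y = 0)
    (y : ℕ → EuclideanSpace ℝ (Fin m)) (η : ℕ → ℝ)
    (halg : IsLCR F V lam ηinit f1 y η ∨ IsLCM F V lam ηinit f1 f2 y η)
    (hbdd : Bornology.IsBounded (Set.range y))
    (ystar : EuclideanSpace ℝ (Fin m)) (hZ : lyapDeriv F V ystar = 0)
    (hconv : Tendsto y atTop (nhds ystar))
    (U : Set (EuclideanSpace ℝ (Fin m))) (hU : U ∈ nhds ystar)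
    (γ α₁ c c₁ c₂ α₂ : ℝ)
    (hγ : 0 ≤ γ) (hα₁ : α₁ ∈ Set.Ioo (0 : ℝ) 1) (hc : 0 < c) (hc₁ : 0 < c₁)
    (hi : ∀ z ∈ U, lyapDeriv F V z ≤ -c * ‖gradient V z‖ ^ γ * ‖F z‖)
    (hii : ∀ z ∈ U, c₁ * (V z - V ystar) ^ (1 - α₁) ≤ ‖gradient V z‖)
    (hiii : γ * (1 - α₁) < 1)
    (hc₂ : 0 < c₂) (hα₂ : α₂ ≤ 1)
    (hiv : ∀ z ∈ U, c₂ * (V z - V ystar) ^ (1 - α₂) ≤ ‖F z‖)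
    (hcase : α₂ / (1 - α₁) = γ) :
    ∃ n₀ : ℕ, ∀ n ≥ n₀,
      ‖y n - ystar‖ ≤
        (1 / (lam * c * c₁ ^ γ * (1 - γ * (1 - α₁)))) *
          (V (y n₀) - V ystar) ^ (1 - γ * (1 - α₁)) *
          Real.exp (-(c₂ / (1 / (lam * c * c₁ ^ γ * (1 - γ * (1 - α₁))))) *
            ∑ k ∈ Finset.Ico n₀ n, η k) := by
  obtain ⟨hlam0, hlam1⟩ := hlam
  obtain ⟨hα₁0, hα₁1⟩ := hα₁
  set θ : ℝ := γ * (1 - α₁) with hθdef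
  have h1α₁ : (0:ℝ) < 1 - α₁ := by linarith
  have hθ0 : 0 ≤ θ := mul_nonneg hγ h1α₁.le
  have hθ1 : θ < 1 := hiii
  have h1θ : (0:ℝ) < 1 - θ := by linarith
  have hα₂θ : α₂ = θ := by
    have := (div_eq_iff (ne_of_gt h1α₁)).1 hcase
    rw [hθdef]; linarith
  have hc₁γ : 0 < c₁ ^ γ := Real.rpow_pos_of_pos hc₁ γ
  set L : ℝ := lam * c * c₁ ^ γ with hLdef
  have hL : 0 < L := by positivity
  set C₁ : ℝ := 1 / (L * (1 - θ)) with hC₁def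
  have hC₁ : 0 < C₁ := by positivity
  set K : ℝ := L * c₂ with hKdef
  have hK : 0 < K := mul_pos hL hc₂
  -- basic facts about the algorithm
  have hstepEq : ∀ n, y (n+1) = y n + η n • F (y n) := by
    intro n; rcases halg with h | h <;> exact (h n).1
  have harm : ∀ n, armijoGap F V lam (y n) (η n) ≤ 0 := by
    intro n; rcases halg with h | h <;> · obtain ⟨p, -, h2, -⟩ := (h n).2; exact h2
  have hf10 : (0:ℝ) < f1 := lt_trans one_pos hf1
  have hf20 : (0:ℝ) < f2 := lt_trans one_pos hf2
  have hηpos : ∀ n, 0 < η n := by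
    rcases halg with h | h
    · intro n; obtain ⟨p, hp, -, -⟩ := (h n).2
      rw [hp]; exact div_pos hηinit (pow_pos hf10 p)
    · intro n; induction n with
      | zero =>
        obtain ⟨p, hp, -, -⟩ := (h 0).2
        simp only [if_pos rfl] at hp
        rw [hp]; exact div_pos hηinit (pow_pos hf10 p)
      | succ k ih =>
        obtain ⟨p, hp, -, -⟩ := (h (k+1)).2
        simp only [Nat.succ_ne_zero, if_false, Nat.add_sub_cancel] at hp
        rw [hp]; exact div_pos (mul_pos hf20 ih) (pow_pos hf10 p)
  have hdesc : ∀ n, V (y (n+1)) - V (y n) ≤ lam * η n * lyapDeriv F V (y n) := by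
    intro n
    have h := harm n
    simp only [armijoGap] at h
    rw [← hstepEq n] at h
    linarith
  have hmono : ∀ n, V (y (n+1)) ≤ V (y n) := by
    intro n
    have h1 := hdesc n
    have h2 := hVdot (y n)
    nlinarith [mul_pos hlam0 (hηpos n)]
  have hanti : Antitone fun n => V (y n) := antitone_nat_of_succ_le hmono
  have hVlim : Tendsto (fun n => V (y n)) atTop (nhds (V ystar)) :=
    (hV.continuous.tendsto ystar).comp hconv
  have hVge : ∀ n, V ystar ≤ V (y n) := by
    intro n
    exact le_of_tendsto hVlim (eventually_atTop.2 ⟨n, fun m hm => hanti hm⟩)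
  have ha0 : ∀ n, 0 ≤ V (y n) - V ystar := fun n => sub_nonneg.2 (hVge n)
  have haanti : ∀ n, V (y (n+1)) - V ystar ≤ V (y n) - V ystar :=
    fun n => sub_le_sub_right (hmono n) _
  obtain ⟨n₀, hn₀⟩ := eventually_atTop.1 (hconv.eventually_mem hU)
  refine ⟨n₀, fun n hn => ?_⟩
  -- step lemma 1
  have hstep1 : ∀ k, y k ∈ U →
      V (y (k+1)) - V ystar ≤ (V (y k) - V ystar)
        - L * η k * (V (y k) - V ystar) ^ θ * ‖F (y k)‖ := by
    intro k hk
    have hiik := hii (y k) hk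
    have hbase : 0 ≤ c₁ * (V (y k) - V ystar) ^ (1 - α₁) :=
      mul_nonneg hc₁.le (Real.rpow_nonneg (ha0 k) _)
    have h2 : c₁ ^ γ * (V (y k) - V ystar) ^ θ ≤ ‖gradient V (y k)‖ ^ γ := by
      have h := Real.rpow_le_rpow hbase hiik hγ
      rw [Real.mul_rpow hc₁.le (Real.rpow_nonneg (ha0 k) _),
        ← Real.rpow_mul (ha0 k)] at h
      rwa [hθdef, mul_comm γ (1 - α₁)]
    have h3 := hi (y k) hk
    have hFnn : (0:ℝ) ≤ ‖F (y k)‖ := norm_nonneg _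
    have h4 : c * (c₁ ^ γ * (V (y k) - V ystar) ^ θ) * ‖F (y k)‖
        ≤ c * ‖gradient V (y k)‖ ^ γ * ‖F (y k)‖ :=
      mul_le_mul_of_nonneg_right (mul_le_mul_of_nonneg_left h2 hc.le) hFnn
    have h5 : lyapDeriv F V (y k)
        ≤ -(c * (c₁ ^ γ * (V (y k) - V ystar) ^ θ) * ‖F (y k)‖) := by linarith
    have h6 : lam * η k * lyapDeriv F V (y k)
        ≤ -(L * η k * (V (y k) - V ystar) ^ θ * ‖F (y k)‖) := by
      calc lam * η k * lyapDeriv F V (y k)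
          ≤ lam * η k * (-(c * (c₁ ^ γ * (V (y k) - V ystar) ^ θ) * ‖F (y k)‖)) :=
            mul_le_mul_of_nonneg_left h5 (mul_pos hlam0 (hηpos k)).le
        _ = -(L * η k * (V (y k) - V ystar) ^ θ * ‖F (y k)‖) := by rw [hLdef]; ring
    have h7 := hdesc k
    linarith
  have hterm_nn : ∀ k, 0 ≤ L * η k * (V (y k) - V ystar) ^ θ * ‖F (y k)‖ := by
    intro k
    exact mul_nonneg (mul_nonneg (mul_nonneg hL.le (hηpos k).le)
      (Real.rpow_nonneg (ha0 k) _)) (norm_nonneg _)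
  -- vanishing case
  have hzero : ∀ k, y k ∈ U → V (y k) - V ystar = 0 → F (y k) = 0 := by
    intro k hk hak
    have hak1 : V (y (k+1)) - V ystar = 0 :=
      le_antisymm (hak ▸ haanti k) (ha0 _)
    have h1 := hdesc k
    have h2 := hVdot (y k)
    have h3 : 0 ≤ lam * η k * lyapDeriv F V (y k) := by
      have : V (y (k+1)) - V (y k) = 0 := by linarith
      linarith
    have hdot0 : lyapDeriv F V (y k) = 0 := by
      have hge : 0 ≤ lyapDeriv F V (y k) := by
        nlinarith [mul_pos hlam0 (hηpos k)]
      linarith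
    have h4 := hi (y k) hk
    have h6 : c * (‖gradient V (y k)‖ ^ γ * ‖F (y k)‖) ≤ 0 := by
      rw [hdot0] at h4; nlinarith
    have hABnn : 0 ≤ ‖gradient V (y k)‖ ^ γ * ‖F (y k)‖ :=
      mul_nonneg (Real.rpow_nonneg (norm_nonneg _) _) (norm_nonneg _)
    have hAB0 : ‖gradient V (y k)‖ ^ γ * ‖F (y k)‖ = 0 := by
      have h7 : c * (‖gradient V (y k)‖ ^ γ * ‖F (y k)‖) ≤ c * 0 := by
        rw [mul_zero]; exact h6
      have := le_of_mul_le_mul_left h7 hc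
      linarith
    rcases mul_eq_zero.1 hAB0 with hA | hB
    · by_cases hγ0 : γ = 0
      · rw [hγ0, Real.rpow_zero] at hA; exact absurd hA one_ne_zero
      · have : ‖gradient V (y k)‖ = 0 := (Real.rpow_eq_zero (norm_nonneg _) hγ0).1 hA
        exact himp _ (norm_eq_zero.1 this)
    · exact norm_eq_zero.1 hB
  -- exponential one-step decay
  have hstepExp : ∀ k, y k ∈ U →
      V (y (k+1)) - V ystar ≤ (V (y k) - V ystar) * Real.exp (-(K * η k)) := by
    intro k hk
    rcases eq_or_lt_of_le (ha0 k) with h0 | hpos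
    · have h1 : V (y (k+1)) - V ystar = 0 := le_antisymm (h0 ▸ haanti k) (ha0 _)
      rw [h1, ← h0]; simp
    · have hFk := hiv (y k) hk
      have hFn : c₂ * (V (y k) - V ystar) ^ (1 - θ) ≤ ‖F (y k)‖ := by
        rwa [hα₂θ] at hFk
      have h1 := hstep1 k hk
      have haθ : (V (y k) - V ystar) ^ θ * (V (y k) - V ystar) ^ (1-θ)
          = V (y k) - V ystar := by
        rw [← Real.rpow_add hpos]; norm_num
      have hmul : L * η k * (V (y k) - V ystar) ^ θ * (c₂ * (V (y k) - V ystar) ^ (1-θ))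
          ≤ L * η k * (V (y k) - V ystar) ^ θ * ‖F (y k)‖ :=
        mul_le_mul_of_nonneg_left hFn
          (mul_nonneg (mul_nonneg hL.le (hηpos k).le) (Real.rpow_nonneg (ha0 k) _))
      have heq : L * η k * (V (y k) - V ystar) ^ θ * (c₂ * (V (y k) - V ystar) ^ (1-θ))
          = K * η k * (V (y k) - V ystar) := by
        rw [hKdef]
        calc L * η k * (V (y k) - V ystar) ^ θ * (c₂ * (V (y k) - V ystar) ^ (1-θ))
            = L * c₂ * η k * ((V (y k) - V ystar) ^ θ * (V (y k) - V ystar) ^ (1-θ)) := by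
              ring
          _ = L * c₂ * η k * (V (y k) - V ystar) := by rw [haθ]
      have h3 : V (y (k+1)) - V ystar ≤ (V (y k) - V ystar) * (1 - K * η k) := by
        linarith [h1, hmul, heq]
      have h4 : 1 - K * η k ≤ Real.exp (-(K * η k)) := by
        linarith [Real.add_one_le_exp (-(K * η k))]
      calc V (y (k+1)) - V ystar ≤ (V (y k) - V ystar) * (1 - K * η k) := h3
        _ ≤ (V (y k) - V ystar) * Real.exp (-(K * η k)) :=
          mul_le_mul_of_nonneg_left h4 (ha0 k)
  -- length one-step bound
  have hstep3 : ∀ k, y k ∈ U → η k * ‖F (y k)‖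
      ≤ C₁ * ((V (y k) - V ystar) ^ (1-θ) - (V (y (k+1)) - V ystar) ^ (1-θ)) := by
    intro k hk
    rcases eq_or_lt_of_le (ha0 k) with h0 | hpos
    · have hF0 := hzero k hk h0.symm
      have hk1 : V (y (k+1)) - V ystar = 0 := le_antisymm (h0 ▸ haanti k) (ha0 _)
      rw [hF0, hk1, ← h0]
      simp
    · have h1 := hstep1 k hk
      have hamgm := Real.geom_mean_le_arith_mean2_weighted hθ0 h1θ.le
        (ha0 k) (ha0 (k+1)) (by ring)
      have haθ : (V (y k) - V ystar) ^ θ * (V (y k) - V ystar) ^ (1-θ)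
          = V (y k) - V ystar := by
        rw [← Real.rpow_add hpos]; norm_num
      have haθpos : 0 < (V (y k) - V ystar) ^ θ := Real.rpow_pos_of_pos hpos θ
      have hLC : L * C₁ = 1 / (1 - θ) := by
        rw [hC₁def, one_div, mul_inv, ← mul_assoc, mul_inv_cancel₀ hL.ne', one_mul,
          one_div]
      have expand : L * (V (y k) - V ystar) ^ θ
            * (C₁ * ((V (y k) - V ystar) ^ (1-θ) - (V (y (k+1)) - V ystar) ^ (1-θ)))
          = (1/(1-θ)) * ((V (y k) - V ystar)
            - (V (y k) - V ystar) ^ θ * (V (y (k+1)) - V ystar) ^ (1-θ)) := by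
        calc L * (V (y k) - V ystar) ^ θ
              * (C₁ * ((V (y k) - V ystar) ^ (1-θ) - (V (y (k+1)) - V ystar) ^ (1-θ)))
            = L * C₁ * ((V (y k) - V ystar) ^ θ * (V (y k) - V ystar) ^ (1-θ)
              - (V (y k) - V ystar) ^ θ * (V (y (k+1)) - V ystar) ^ (1-θ)) := by ring
          _ = _ := by rw [hLC, haθ]
      have key : V (y k) - V ystar - (V (y (k+1)) - V ystar)
          ≤ L * (V (y k) - V ystar) ^ θ
            * (C₁ * ((V (y k) - V ystar) ^ (1-θ) - (V (y (k+1)) - V ystar) ^ (1-θ))) := by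
        rw [expand, one_div, inv_mul_eq_div, le_div_iff₀ h1θ]
        linarith [hamgm]
      have h3 : L * (V (y k) - V ystar) ^ θ * (η k * ‖F (y k)‖)
          ≤ V (y k) - V ystar - (V (y (k+1)) - V ystar) := by linarith [h1]
      exact le_of_mul_le_mul_left (h3.trans key) (mul_pos hL haθpos)
  -- exponential decay of the Lyapunov gap
  have hdecay : ∀ nn, n₀ ≤ nn → V (y nn) - V ystar
      ≤ (V (y n₀) - V ystar) * Real.exp (-(K * ∑ k ∈ Finset.Ico n₀ nn, η k)) := by
    intro nn hnn
    induction nn, hnn using Nat.le_induction with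
    | base => simp
    | succ nn hnn ih =>
      have h1 := hstepExp nn (hn₀ nn hnn)
      have hsum : ∑ k ∈ Finset.Ico n₀ (nn+1), η k
          = (∑ k ∈ Finset.Ico n₀ nn, η k) + η nn := Finset.sum_Ico_succ_top hnn _
      have harg : -(K * ∑ k ∈ Finset.Ico n₀ nn, η k) + -(K * η nn)
          = -(K * ∑ k ∈ Finset.Ico n₀ (nn+1), η k) := by rw [hsum]; ring
      calc V (y (nn+1)) - V ystar
          ≤ (V (y nn) - V ystar) * Real.exp (-(K * η nn)) := h1
        _ ≤ ((V (y n₀) - V ystar)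
              * Real.exp (-(K * ∑ k ∈ Finset.Ico n₀ nn, η k)))
            * Real.exp (-(K * η nn)) :=
          mul_le_mul_of_nonneg_right ih (Real.exp_nonneg _)
        _ = (V (y n₀) - V ystar)
            * Real.exp (-(K * ∑ k ∈ Finset.Ico n₀ (nn+1), η k)) := by
          rw [mul_assoc, ← Real.exp_add, harg]
  -- telescoping length bound
  have hlen : ∀ N, n ≤ N → ‖y n - y N‖
      ≤ C₁ * ((V (y n) - V ystar) ^ (1-θ) - (V (y N) - V ystar) ^ (1-θ)) := by
    intro N hN
    induction N, hN using Nat.le_induction with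
    | base => simp
    | succ N hN ih =>
      have h3 := hstep3 N (hn₀ N (hn.trans hN))
      have tri := dist_triangle (y n) (y N) (y (N+1))
      rw [dist_eq_norm, dist_eq_norm, dist_eq_norm] at tri
      have hnormstep : ‖y N - y (N+1)‖ = η N * ‖F (y N)‖ := by
        rw [hstepEq N, show y N - (y N + η N • F (y N)) = -(η N • F (y N)) by abel,
          norm_neg, norm_smul, Real.norm_eq_abs, abs_of_pos (hηpos N)]
      rw [hnormstep] at tri
      calc ‖y n - y (N+1)‖ ≤ ‖y n - y N‖ + η N * ‖F (y N)‖ := tri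
        _ ≤ C₁ * ((V (y n) - V ystar) ^ (1-θ) - (V (y N) - V ystar) ^ (1-θ))
            + C₁ * ((V (y N) - V ystar) ^ (1-θ) - (V (y (N+1)) - V ystar) ^ (1-θ)) := by
          linarith
        _ = C₁ * ((V (y n) - V ystar) ^ (1-θ) - (V (y (N+1)) - V ystar) ^ (1-θ)) := by
          ring
  -- pass to the limit
  have hfinal1 : ‖y n - ystar‖ ≤ C₁ * (V (y n) - V ystar) ^ (1-θ) := by
    have htt : Tendsto (fun N => ‖y n - y N‖) atTop (nhds ‖y n - ystar‖) :=
      (tendsto_const_nhds.sub hconv).norm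
    refine le_of_tendsto htt (eventually_atTop.2 ⟨n, fun N hN => ?_⟩)
    have h1 := hlen N hN
    have hY : 0 ≤ (V (y N) - V ystar) ^ (1-θ) := Real.rpow_nonneg (ha0 N) _
    nlinarith [mul_nonneg hC₁.le hY]
  -- combine
  have h5 : (V (y n) - V ystar) ^ (1-θ)
      ≤ ((V (y n₀) - V ystar)
          * Real.exp (-(K * ∑ k ∈ Finset.Ico n₀ n, η k))) ^ (1-θ) :=
    Real.rpow_le_rpow (ha0 n) (hdecay n hn) h1θ.le
  have h6 : ((V (y n₀) - V ystar) * Real.exp (-(K * ∑ k ∈ Finset.Ico n₀ n, η k))) ^ (1-θ)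
      = (V (y n₀) - V ystar) ^ (1-θ)
        * Real.exp (-(K * ∑ k ∈ Finset.Ico n₀ n, η k) * (1-θ)) := by
    rw [Real.mul_rpow (ha0 n₀) (Real.exp_nonneg _), ← Real.exp_mul]
  have hdiv : c₂ / C₁ = c₂ * (L * (1 - θ)) := by
    rw [hC₁def, one_div, div_eq_mul_inv, inv_inv]
  have harg : -(K * ∑ k ∈ Finset.Ico n₀ n, η k) * (1-θ)
      = -(c₂ / C₁) * ∑ k ∈ Finset.Ico n₀ n, η k := by
    rw [hdiv, hKdef]; ring
  calc ‖y n - ystar‖ ≤ C₁ * (V (y n) - V ystar) ^ (1-θ) := hfinal1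
    _ ≤ C₁ * ((V (y n₀) - V ystar) ^ (1-θ)
        * Real.exp (-(K * ∑ k ∈ Finset.Ico n₀ n, η k) * (1-θ))) := by
      rw [← h6]; exact mul_le_mul_of_nonneg_left h5 hC₁.le
    _ = C₁ * (V (y n₀) - V ystar) ^ (1-θ)
        * Real.exp (-(c₂ / C₁) * ∑ k ∈ Finset.Ico n₀ n, η k) := by
      rw [harg]; ring
end

section
/- Let (u_n) and (v_n) be sequences of nonnegative reals with u_n > 0 unless stated otherwise, let α ≥ 0, and assume u_{n+1} − u_n ≤ −v_n·u_n^α for all n ∈ ℕ. Then: (a) if α > 1, u_n ≤ 1 / [ u_0^{1−α} + (α−1)·Σ_{k=0}^{n−1} v_k ]^{1/(α−1)} for all n; (b) if α = 1, u_n ≤ u_0·exp(−Σ_{k=0}^{n−1} v_k) for all n; (c) if α < 1 and Σ_k v_k = +∞, then u_n = 0 for every n satisfying Σ_{k=0}^{n−1} v_k ≥ u_0^{1−α}/(1−α). -/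
open Filter

/-- Bernoulli's inequality for nonpositive real exponents. -/
lemma bernoulli_nonpos {s p : ℝ} (hs : -1 < s) (hp : p ≤ 0) :
    1 + p * s ≤ (1 + s) ^ p := by
  have h1s : 0 < 1 + s := by linarith
  rcases le_or_gt (1 + p * s) 0 with h | h
  · exact h.trans (Real.rpow_pos_of_pos h1s p).le
  rcases le_or_gt (-1) p with hp1 | hp1
  · -- case -1 ≤ p ≤ 0 : use the concave Bernoulli on exponent -p ∈ [0,1]
    have hq : (1 + s) ^ (-p) ≤ 1 + (-p) * s :=
      rpow_one_add_le_one_add_mul_self hs.le (by linarith) (by linarith)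
    have hpos : 0 < (1 + s) ^ (-p) := Real.rpow_pos_of_pos h1s _
    have hid : (1 + s) ^ p = ((1 + s) ^ (-p))⁻¹ := by
      rw [← Real.rpow_neg h1s.le, neg_neg]
    have hq' : 0 < 1 + -p * s := lt_of_lt_of_le hpos hq
    rw [hid]
    calc 1 + p * s ≤ 1 / (1 + -p * s) := by
          rw [le_div_iff₀ hq']; nlinarith [sq_nonneg (p * s)]
      _ ≤ 1 / ((1 + s) ^ (-p)) := one_div_le_one_div_of_le hpos hq
      _ = ((1 + s) ^ (-p))⁻¹ := one_div _
  · -- case p ≤ -1 : use the convex Bernoulli on exponent -p ≥ 1 at u = -s/(1+s)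
    have hu : (-1 : ℝ) ≤ -s / (1 + s) := by
      rw [neg_le, ← neg_div, neg_neg]
      rw [div_le_one h1s]; linarith
    have hq : 1 + (-p) * (-s / (1 + s)) ≤ (1 + -s / (1 + s)) ^ (-p) :=
      one_add_mul_self_le_rpow_one_add hu (by linarith)
    have hval : 1 + -s / (1 + s) = (1 + s)⁻¹ := by field_simp; ring
    have hid : ((1 + s)⁻¹) ^ (-p) = (1 + s) ^ p := by
      rw [Real.inv_rpow h1s.le, ← Real.rpow_neg h1s.le, neg_neg]
    rw [hval, hid] at hq
    have hkey : (0:ℝ) ≤ -p * s ^ 2 / (1 + s) :=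
      div_nonneg (mul_nonneg (by linarith) (sq_nonneg s)) h1s.le
    have hEq : 1 + -p * (-s / (1 + s)) = 1 + p * s + -p * s ^ 2 / (1 + s) := by
      field_simp; ring
    calc 1 + p * s ≤ 1 + -p * (-s / (1 + s)) := by rw [hEq]; linarith
      _ ≤ (1 + s) ^ p := hq

/-- Convex step: `α > 1`. -/
lemma gronwall_step_convex {α v a b : ℝ} (hα : 1 < α) (ha : 0 < a) (hb : 0 < b)
    (h : b - a ≤ -v * a ^ α) :
    a ^ (1 - α) + (α - 1) * v ≤ b ^ (1 - α) := by
  set p : ℝ := 1 - α with hpdef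
  have hp0 : p < 0 := by rw [hpdef]; linarith
  have hba : (-1 : ℝ) < b / a - 1 := by
    have : 0 < b / a := div_pos hb ha; linarith
  have hber : 1 + p * (b / a - 1) ≤ (b / a) ^ p := by
    have := bernoulli_nonpos hba hp0.le
    rwa [show (1:ℝ) + (b / a - 1) = b / a by ring] at this
  have hap : 0 < a ^ p := Real.rpow_pos_of_pos ha p
  have hdiv : (b / a) ^ p = b ^ p / a ^ p := Real.div_rpow hb.le ha.le p
  have hsum : α + p = 1 := by rw [hpdef]; ring
  have haa : a ^ α * a ^ p = a := by
    rw [← Real.rpow_add ha, hsum, Real.rpow_one]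
  -- multiply Bernoulli by a * a^p  (both positive)
  have h1 : a ^ p * a + p * (a ^ p * (b - a)) ≤ a * b ^ p := by
    have := mul_le_mul_of_nonneg_left hber (by positivity : (0:ℝ) ≤ a * a ^ p)
    calc a ^ p * a + p * (a ^ p * (b - a))
        = a * a ^ p * (1 + p * (b / a - 1)) := by field_simp
      _ ≤ a * a ^ p * ((b / a) ^ p) := this
      _ = a * b ^ p := by rw [hdiv]; field_simp
  -- estimate the middle term
  have h2 : a ^ p * (b - a) ≤ -v * a := by
    calc a ^ p * (b - a) ≤ a ^ p * (-v * a ^ α) :=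
          mul_le_mul_of_nonneg_left h hap.le
      _ = -v * (a ^ α * a ^ p) := by ring
      _ = -v * a := by rw [haa]
  have h3 : p * (-v * a) ≤ p * (a ^ p * (b - a)) :=
    mul_le_mul_of_nonpos_left h2 hp0.le
  have h4 : a * (a ^ p + (α - 1) * v) ≤ a * b ^ p := by
    have : p * (-v * a) = a * ((α - 1) * v) := by rw [hpdef]; ring
    nlinarith
  have := le_of_mul_le_mul_left (by linarith [h4] : a * (a ^ p + (α - 1) * v) ≤ a * b ^ p) ha
  linarith

/-- Concave step: `0 ≤ α < 1`. -/
lemma gronwall_step_concave {α v a b : ℝ} (hα0 : 0 ≤ α) (hα : α < 1) (ha : 0 < a) (hb : 0 ≤ b)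
    (h : b - a ≤ -v * a ^ α) :
    b ^ (1 - α) ≤ a ^ (1 - α) - (1 - α) * v := by
  set p : ℝ := 1 - α with hpdef
  have hp0 : 0 < p := by rw [hpdef]; linarith
  have hba : (-1 : ℝ) ≤ b / a - 1 := by
    have : 0 ≤ b / a := div_nonneg hb ha.le; linarith
  have hber : (b / a) ^ p ≤ 1 + p * (b / a - 1) := by
    have := rpow_one_add_le_one_add_mul_self hba hp0.le
      (by rw [hpdef]; linarith : p ≤ 1)
    rwa [show (1:ℝ) + (b / a - 1) = b / a by ring] at this
  have hap : 0 < a ^ p := Real.rpow_pos_of_pos ha p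
  have hdiv : (b / a) ^ p = b ^ p / a ^ p := Real.div_rpow hb ha.le p
  have hsum : α + p = 1 := by rw [hpdef]; ring
  have haa : a ^ α * a ^ p = a := by
    rw [← Real.rpow_add ha, hsum, Real.rpow_one]
  have h1 : a * b ^ p ≤ a ^ p * a + p * (a ^ p * (b - a)) := by
    have := mul_le_mul_of_nonneg_left hber (by positivity : (0:ℝ) ≤ a * a ^ p)
    calc a * b ^ p = a * a ^ p * ((b / a) ^ p) := by rw [hdiv]; field_simp
      _ ≤ a * a ^ p * (1 + p * (b / a - 1)) := this
      _ = a ^ p * a + p * (a ^ p * (b - a)) := by field_simp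
  have h2 : a ^ p * (b - a) ≤ -v * a := by
    calc a ^ p * (b - a) ≤ a ^ p * (-v * a ^ α) := mul_le_mul_of_nonneg_left h hap.le
      _ = -v * (a ^ α * a ^ p) := by ring
      _ = -v * a := by rw [haa]
  have h3 : p * (a ^ p * (b - a)) ≤ p * (-v * a) := mul_le_mul_of_nonneg_left h2 hp0.le
  have h4 : a * b ^ p ≤ a * (a ^ p - p * v) := by nlinarith
  exact le_of_mul_le_mul_left h4 ha

/-- **Discrete Gronwall inequality for power nonlinearities.** If `(u_n)`, `(v_n)` are
nonnegative, `α ≥ 0` and `u_{n+1} − u_n ≤ −v_n u_n^α` for all `n`, then: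
(a) if `α > 1`, `u_n ≤ 1/[u_0^{1−α} + (α−1) Σ_{k<n} v_k]^{1/(α−1)}`;
(b) if `α = 1`, `u_n ≤ u_0 exp(−Σ_{k<n} v_k)`;
(c) if `α < 1` and `Σ v_k = ∞`, then `u_n = 0` whenever
`Σ_{k<n} v_k ≥ u_0^{1−α}/(1−α)`. -/
theorem discrete_gronwall_powers
    (u v : ℕ → ℝ) (hu : ∀ n, 0 ≤ u n) (hv : ∀ n, 0 ≤ v n)
    (α : ℝ) (hα : 0 ≤ α)
    (hrec : ∀ n, u (n + 1) - u n ≤ -(v n) * u n ^ α) :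
    (1 < α → ∀ n, u n ≤
      ((u 0 ^ (1 - α) + (α - 1) * ∑ k ∈ Finset.range n, v k) ^ ((1 : ℝ) / (α - 1)))⁻¹) ∧
    (α = 1 → ∀ n, u n ≤ u 0 * Real.exp (-∑ k ∈ Finset.range n, v k)) ∧
    (α < 1 → Tendsto (fun n => ∑ k ∈ Finset.range n, v k) atTop atTop →
      ∀ n, u 0 ^ (1 - α) / (1 - α) ≤ ∑ k ∈ Finset.range n, v k → u n = 0) := by
  -- if u n = 0, then u (n+1) = 0
  have hzero : ∀ n, u n = 0 → u (n + 1) = 0 := by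
    intro n h0
    have h1 : u (n + 1) ≤ u n - v n * u n ^ α := by linarith [hrec n]
    have h2 : 0 ≤ v n * u n ^ α := mul_nonneg (hv n) (Real.rpow_nonneg (hu n) α)
    rw [h0] at h1 h2
    have := hu (n + 1); linarith
  have hSnonneg : ∀ n, 0 ≤ ∑ k ∈ Finset.range n, v k :=
    fun n => Finset.sum_nonneg fun k _ => hv k
  refine ⟨?_, ?_, ?_⟩
  · -- (a) α > 1
    intro hα1 n
    set p : ℝ := 1 - α with hpdef
    have hp0 : p < 0 := by rw [hpdef]; linarith
    have claim : ∀ n, u n = 0 ∨ (0 < u n ∧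
        u 0 ^ p + (α - 1) * ∑ k ∈ Finset.range n, v k ≤ u n ^ p) := by
      intro n
      induction n with
      | zero =>
        rcases (hu 0).eq_or_lt with h | h
        · exact Or.inl h.symm
        · exact Or.inr ⟨h, by simp⟩
      | succ m ih =>
        rcases ih with h0 | ⟨hpos, hIH⟩
        · exact Or.inl (hzero m h0)
        · rcases (hu (m + 1)).eq_or_lt with h | h
          · exact Or.inl h.symm
          · refine Or.inr ⟨h, ?_⟩
            have step := gronwall_step_convex hα1 hpos h (hrec m)
            rw [Finset.sum_range_succ]
            calc u 0 ^ p + (α - 1) * ((∑ k ∈ Finset.range m, v k) + v m)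
                = (u 0 ^ p + (α - 1) * ∑ k ∈ Finset.range m, v k) + (α - 1) * v m := by ring
              _ ≤ u m ^ p + (α - 1) * v m := by linarith
              _ ≤ u (m + 1) ^ p := step
    rcases claim n with h0 | ⟨hpos, hX⟩
    · rw [h0]
      have h1 : (0:ℝ) ≤ u 0 ^ p + (α - 1) * ∑ k ∈ Finset.range n, v k :=
        add_nonneg (Real.rpow_nonneg (hu 0) p)
          (mul_nonneg (by linarith) (hSnonneg n))
      exact inv_nonneg.mpr (Real.rpow_nonneg h1 _)
    · -- u 0 > 0
      have hanti : ∀ m, u (m + 1) ≤ u m := by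
        intro m
        have h2 : 0 ≤ v m * u m ^ α := mul_nonneg (hv m) (Real.rpow_nonneg (hu m) α)
        linarith [hrec m]
      have hmono : Antitone u := antitone_nat_of_succ_le hanti
      have hu0 : 0 < u 0 := lt_of_lt_of_le hpos (hmono (Nat.zero_le n))
      set X : ℝ := u 0 ^ p + (α - 1) * ∑ k ∈ Finset.range n, v k with hXdef
      have hXpos : 0 < X :=
        add_pos_of_pos_of_nonneg (Real.rpow_pos_of_pos hu0 p)
          (mul_nonneg (by linarith) (hSnonneg n))
      have hpne : p ≠ 0 := hp0.ne
      have key : (u n ^ p) ^ p⁻¹ ≤ X ^ p⁻¹ :=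
        Real.rpow_le_rpow_of_nonpos hXpos hX (by
          exact inv_nonpos.mpr hp0.le)
      rw [Real.rpow_rpow_inv (hu n) hpne] at key
      have hexp : p⁻¹ = -((1:ℝ) / (α - 1)) := by
        rw [hpdef, one_div, show (1:ℝ) - α = -(α - 1) by ring, inv_neg]
      rw [hexp, Real.rpow_neg hXpos.le] at key
      exact key
  · -- (b) α = 1
    intro hα1 n
    subst hα1
    induction n with
    | zero => simp
    | succ m ih =>
      have h1 : u (m + 1) ≤ u m * (1 - v m) := by
        have := hrec m
        rw [Real.rpow_one] at this
        nlinarith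
      have h2 : u m * (1 - v m) ≤ u m * Real.exp (-v m) := by
        apply mul_le_mul_of_nonneg_left _ (hu m)
        linarith [Real.add_one_le_exp (-v m)]
      have h3 : u m * Real.exp (-v m) ≤ (u 0 * Real.exp (-∑ k ∈ Finset.range m, v k)) *
          Real.exp (-v m) :=
        mul_le_mul_of_nonneg_right ih (Real.exp_nonneg _)
      calc u (m + 1) ≤ u m * (1 - v m) := h1
        _ ≤ u m * Real.exp (-v m) := h2
        _ ≤ (u 0 * Real.exp (-∑ k ∈ Finset.range m, v k)) * Real.exp (-v m) := h3
        _ = u 0 * Real.exp (-∑ k ∈ Finset.range (m + 1), v k) := by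
            rw [Finset.sum_range_succ, mul_assoc, ← Real.exp_add]; ring_nf
  · -- (c) α < 1
    intro hα1 _ n hS
    set p : ℝ := 1 - α with hpdef
    have hp0 : 0 < p := by rw [hpdef]; linarith
    have claim : ∀ n, u n = 0 ∨
        u n ^ p ≤ u 0 ^ p - p * ∑ k ∈ Finset.range n, v k := by
      intro n
      induction n with
      | zero => exact Or.inr (by simp)
      | succ m ih =>
        rcases ih with h0 | hIH
        · exact Or.inl (hzero m h0)
        · rcases (hu m).eq_or_lt with h | h
          · exact Or.inl (hzero m h.symm)
          · refine Or.inr ?_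
            have step := gronwall_step_concave hα hα1 h (hu (m + 1)) (hrec m)
            rw [Finset.sum_range_succ]
            calc u (m + 1) ^ p ≤ u m ^ p - p * v m := step
              _ ≤ (u 0 ^ p - p * ∑ k ∈ Finset.range m, v k) - p * v m := by linarith
              _ = u 0 ^ p - p * ((∑ k ∈ Finset.range m, v k) + v m) := by ring
    rcases claim n with h0 | hX
    · exact h0
    · have hS' : u 0 ^ p ≤ p * ∑ k ∈ Finset.range n, v k := by
        rw [div_le_iff₀ hp0] at hS
        linarith
      have h1 : u n ^ p ≤ 0 := by linarith
      have h2 : 0 ≤ u n ^ p := Real.rpow_nonneg (hu n) p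
      by_contra hne
      have hpos : 0 < u n := lt_of_le_of_ne (hu n) (Ne.symm hne)
      exact absurd (le_antisymm h1 h2) (Real.rpow_pos_of_pos hpos p).ne'
end
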